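/- arXiv:1301.7148 — 8 statements merged into one kernel-verified Lean document; each statement's English description precedes it below -/
import Mathlib

section
/- For any two Borel probability measures μ and ν on ℝ, there exist probability spaces (Ω₁, F₁, P₁) and (Ω₂, F₂, P₂), uniformly distributed random variables X : Ω₁ → [0,1] and Y : Ω₂ → [0,1], and a single function h : [0,1] → ℝ such that h ∘ X is measurable with law μ (i.e., the pushforward of P₁ under h ∘ X equals μ) and h ∘ Y is measurable with law ν. -/
open MeasureTheory Set Pointwise ProbabilityTheory Filter

lemma exists_phi : ∃ φ : ℝ →ₗ[ℚ] ℚ, φ 1 = 1 := by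
  set p : Submodule ℚ ℝ := ℚ ∙ (1:ℝ) with hp
  obtain ⟨q, hq⟩ := p.exists_isCompl
  set e := LinearEquiv.toSpanNonzeroSingleton ℚ ℝ 1 one_ne_zero
  refine ⟨(e.symm : p →ₗ[ℚ] ℚ) ∘ₗ (p.linearProjOfIsCompl q hq), ?_⟩
  have h1 : (p.linearProjOfIsCompl q hq) ((e 1 : p) : ℝ) = e 1 :=
    Submodule.linearProjOfIsCompl_apply_left hq (e 1)
  have h2 : ((e 1 : p) : ℝ) = 1 := by simp [e]
  rw [h2] at h1
  simp [h1]

lemma null_of_parity (φ : ℝ →ₗ[ℚ] ℚ) (hφ : φ 1 = 1) (S : Set ℝ) (hS : MeasurableSet S)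
    (hpar : ∀ x ∈ S, ∀ y ∈ S, (Even ⌊φ x⌋ ↔ Even ⌊φ y⌋)) : volume S = 0 := by
  by_contra h
  have hpos : 0 < volume S := pos_iff_ne_zero.mpr h
  have hst : S - S ∈ nhds (0:ℝ) :=
    MeasureTheory.Measure.sub_mem_nhds_zero_of_addHaar_pos volume S hS hpos
  -- a nonzero element of the kernel of φ
  set z : ℝ := Real.sqrt 2 - (φ (Real.sqrt 2) : ℚ) • (1:ℝ) with hzdef
  have hz0 : φ z = 0 := by rw [hzdef, map_sub, LinearMap.map_smul, hφ]; simp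
  have hzne : z ≠ 0 := by
    intro h0
    apply irrational_sqrt_two
    have : Real.sqrt 2 = ((φ (Real.sqrt 2) : ℚ) : ℝ) := by
      have := sub_eq_zero.mp (hzdef ▸ h0)
      simpa [Rat.smul_def] using this
    exact ⟨_, this.symm⟩
  -- dense set of points with φ t = 1
  have hdense : Dense (range fun q : ℚ => (q:ℝ) * z + 1) := by
    have h1 : DenseRange (fun q : ℚ => (q:ℝ)) := Rat.denseRange_cast
    have h2 : DenseRange (fun x : ℝ => x * z + 1) := by
      have : Function.Surjective (fun x : ℝ => x * z + 1) := by
        intro y; exact ⟨(y - 1) / z, by field_simp; ring⟩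
      exact this.denseRange
    have h3 : Continuous (fun x : ℝ => x * z + 1) := by continuity
    exact (h2.comp h1 h3 : DenseRange _)
  obtain ⟨U, hUsub, hUopen, hU0⟩ := mem_nhds_iff.mp hst
  obtain ⟨t, ht, htU⟩ := hdense.exists_mem_open hUopen ⟨0, hU0⟩
  obtain ⟨q, hq⟩ := ht
  obtain ⟨x, hx, y, hy, hxy⟩ := mem_sub.mp (hUsub htU)
  have hφt : φ t = 1 := by
    simp only [← hq]
    have : (q:ℝ) * z + 1 = q • z + 1 := by rw [Rat.smul_def]
    rw [this, map_add, LinearMap.map_smul, hz0, hφ]; simp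
  have hφxy : φ x = φ y + 1 := by
    have : φ (x - y) = 1 := by rw [hxy]; exact hφt
    rw [map_sub] at this; linarith
  have hfloor : ⌊φ x⌋ = ⌊φ y⌋ + 1 := by rw [hφxy, Int.floor_add_one]
  have := hpar x hx y hy
  rw [hfloor, Int.even_add_one] at this
  tauto

lemma exists_quantile (κ : Measure ℝ) [IsProbabilityMeasure κ] :
    ∃ g : ℝ → ℝ, ∀ t ∈ Ioo (0:ℝ) 1, ∀ x, (g t ≤ x ↔ t ≤ cdf κ x) := by
  set F := cdf κ with hF
  refine ⟨fun t => sInf {x | t ≤ F x}, fun t ht x => ?_⟩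
  obtain ⟨ht0, ht1⟩ := ht
  have hne : {x | t ≤ F x}.Nonempty := by
    have := (tendsto_cdf_atTop κ).eventually (eventually_ge_nhds ht1)
    obtain ⟨x, hx⟩ := this.exists
    exact ⟨x, hx⟩
  have hbdd : BddBelow {x | t ≤ F x} := by
    have := (tendsto_cdf_atBot κ).eventually (eventually_lt_nhds ht0)
    obtain ⟨x₀, hx₀⟩ := this.exists
    refine ⟨x₀, fun y hy => ?_⟩
    by_contra hc
    push_neg at hc
    exact absurd (le_trans hy (F.mono hc.le)) (not_le.mpr hx₀)
  constructor
  · intro hgx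
    have hFg : t ≤ F (sInf {x | t ≤ F x}) := by
      have key : ∀ y, sInf {x | t ≤ F x} < y → t ≤ F y := by
        intro y hy
        obtain ⟨s, hsS, hs⟩ := exists_lt_of_csInf_lt hne hy
        exact le_trans hsS (F.mono hs.le)
      have hrc : ContinuousWithinAt F (Ioi (sInf {x | t ≤ F x})) (sInf {x | t ≤ F x}) :=
        (F.right_continuous _).mono Ioi_subset_Ici_self
      refine ge_of_tendsto hrc ?_
      filter_upwards [self_mem_nhdsWithin] with y hy using key y hy
    exact le_trans hFg (F.mono hgx)
  · intro hx
    exact csInf_le hbdd hx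

/-- `X : Ω → ℝ` is a uniformly distributed random variable with values in `[0,1]`:
it is measurable, takes values in `[0,1]`, and its law is Lebesgue measure on `[0,1]`. -/
def IsUniformOn01 {Ω : Type*} [MeasurableSpace Ω] (P : Measure Ω) (X : Ω → ℝ) : Prop :=
  Measurable X ∧ Set.range X ⊆ Set.Icc 0 1 ∧
    P.map X = volume.restrict (Set.Icc (0 : ℝ) 1)

lemma pack (C : Set ℝ) (hC : ∀ S : Set ℝ, MeasurableSet S → S ⊆ Cᶜ → volume S = 0) :
    ∃ (Ω : Type) (_ : MeasurableSpace Ω) (P : Measure Ω) (X : Ω → ℝ),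
      IsProbabilityMeasure P ∧ IsUniformOn01 P X ∧ (∀ ω, X ω ∈ C ∩ Ioo 0 1) ∧
      ∀ (κ : Measure ℝ), IsProbabilityMeasure κ → ∀ g : ℝ → ℝ,
        (∀ t ∈ Ioo (0:ℝ) 1, ∀ x, (g t ≤ x ↔ t ≤ cdf κ x)) →
        Measurable (g ∘ X) ∧ P.map (g ∘ X) = κ := by
  classical
  set J : Set ℝ := Ioo 0 1 with hJ
  set D : Set ℝ := C ∩ J with hD
  set ν : Measure ℝ := volume.restrict J with hν
  have hM : ∀ B : Set ℝ, MeasurableSet B → ν (B ∩ D) = volume (B ∩ J) := by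
    intro B hB
    refine le_antisymm ?_ ?_
    · calc ν (B ∩ D) ≤ ν B := measure_mono inter_subset_left
        _ = volume (B ∩ J) := Measure.restrict_apply hB
    · conv_rhs => rw [measure_eq_iInf]
      refine le_iInf fun U => le_iInf fun hUsub => le_iInf fun hU => ?_
      have hnull : volume ((B ∩ J) \ U) = 0 := by
        refine hC _ ((hB.inter measurableSet_Ioo).diff hU) ?_
        rintro x ⟨⟨hxB, hxJ⟩, hxU⟩ hxC
        exact hxU (hUsub ⟨hxB, hxC, hxJ⟩)
      calc volume (B ∩ J) ≤ volume ((B ∩ J) ∩ U) + volume ((B ∩ J) \ U) :=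
            measure_le_inter_add_diff _ _ _
        _ ≤ volume (U ∩ J) + 0 :=
            add_le_add (measure_mono (fun x hx => ⟨hx.2, hx.1.2⟩)) hnull.le
        _ = ν U := by rw [add_zero, Measure.restrict_apply hU]
  set m : OuterMeasure ↥D := OuterMeasure.comap (Subtype.val) ν.toOuterMeasure with hm
  have him : ∀ s : Set ↥D, m s = ν (Subtype.val '' s) := by
    intro s
    rw [hm, OuterMeasure.comap_apply, Measure.coe_toOuterMeasure]
  have hle : (Subtype.instMeasurableSpace : MeasurableSpace ↥D) ≤ m.caratheodory := by
    intro s hs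
    obtain ⟨B, hB, rfl⟩ := MeasurableSpace.measurableSet_comap.mp hs
    rw [OuterMeasure.isCaratheodory_iff]
    intro t
    rw [him, him, him]
    have h1 : (Subtype.val '' (t ∩ Subtype.val ⁻¹' B) : Set ℝ) = (Subtype.val '' t) ∩ B := by
      ext x
      simp only [mem_image, mem_inter_iff, mem_preimage]
      constructor
      · rintro ⟨ω, ⟨h1, h2⟩, rfl⟩; exact ⟨⟨ω, h1, rfl⟩, h2⟩
      · rintro ⟨⟨ω, h1, rfl⟩, h2⟩; exact ⟨ω, ⟨h1, h2⟩, rfl⟩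
    have h2 : (Subtype.val '' (t \ Subtype.val ⁻¹' B) : Set ℝ) = (Subtype.val '' t) \ B := by
      ext x
      simp only [mem_image, mem_diff, mem_preimage]
      constructor
      · rintro ⟨ω, ⟨h1, h2⟩, rfl⟩; exact ⟨⟨ω, h1, rfl⟩, h2⟩
      · rintro ⟨⟨ω, h1, rfl⟩, h2⟩; exact ⟨ω, ⟨h1, h2⟩, rfl⟩
    rw [h1, h2, measure_inter_add_diff _ hB]
  set P : Measure ↥D := m.toMeasure hle with hP
  have happly : ∀ B : Set ℝ, MeasurableSet B →
      P (Subtype.val ⁻¹' B) = volume (B ∩ J) := by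
    intro B hB
    rw [hP, toMeasure_apply m hle (measurable_subtype_coe hB), him]
    have : (Subtype.val '' (Subtype.val ⁻¹' B) : Set ℝ) = D ∩ B := Subtype.image_preimage_val D B
    rw [this, inter_comm, hM B hB]
  have hprob : IsProbabilityMeasure P := by
    constructor
    have huniv : (univ : Set ↥D) = Subtype.val ⁻¹' univ := rfl
    rw [huniv, happly univ MeasurableSet.univ, univ_inter, hJ, Real.volume_Ioo]
    norm_num
  have hXmeas : Measurable (Subtype.val : ↥D → ℝ) := measurable_subtype_coe
  have hcong : volume.restrict J = volume.restrict (Icc (0:ℝ) 1) :=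
    Measure.restrict_congr_set Ioo_ae_eq_Icc
  have hmap : P.map Subtype.val = volume.restrict (Icc (0:ℝ) 1) := by
    refine Measure.ext fun B hB => ?_
    rw [Measure.map_apply hXmeas hB, happly B hB, ← Measure.restrict_apply hB, hcong]
  refine ⟨↥D, inferInstance, P, Subtype.val, hprob, ⟨hXmeas, ?_, hmap⟩, fun ω => ω.2, ?_⟩
  · rw [Subtype.range_coe]
    exact fun x hx => ⟨hx.2.1.le, hx.2.2.le⟩
  · intro κ hκ g hg
    have hpre : ∀ x : ℝ, (g ∘ Subtype.val) ⁻¹' (Iic x) =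
        (Subtype.val : ↥D → ℝ) ⁻¹' (Iic (cdf κ x)) := by
      intro x; ext ω
      simp only [mem_preimage, Function.comp_apply, mem_Iic]
      exact hg ω.1 ω.2.2 x
    have hgm : Measurable (g ∘ (Subtype.val : ↥D → ℝ)) := by
      apply measurable_of_Iic
      intro x; rw [hpre x]; exact hXmeas measurableSet_Iic
    refine ⟨hgm, ?_⟩
    haveI := hκ
    haveI : IsProbabilityMeasure (P.map (g ∘ Subtype.val)) :=
      Measure.isProbabilityMeasure_map hgm.aemeasurable
    refine Measure.ext_of_Iic _ _ fun x => ?_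
    rw [Measure.map_apply hgm measurableSet_Iic, hpre x, happly _ measurableSet_Iic]
    have h0 : 0 ≤ cdf κ x := cdf_nonneg κ x
    have h1 : cdf κ x ≤ 1 := cdf_le_one κ x
    have hvol : volume (Iic (cdf κ x) ∩ J) = ENNReal.ofReal (cdf κ x) := by
      refine le_antisymm ?_ ?_
      · calc volume (Iic (cdf κ x) ∩ J) ≤ volume (Icc 0 (cdf κ x)) :=
            measure_mono (fun y hy => ⟨hy.2.1.le, hy.1⟩)
          _ = ENNReal.ofReal (cdf κ x) := by rw [Real.volume_Icc, sub_zero]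
      · have e1 : ENNReal.ofReal (cdf κ x) = volume (Ioo 0 (cdf κ x)) := by
          rw [Real.volume_Ioo, sub_zero]
        rw [e1]
        exact measure_mono (fun y hy => ⟨hy.2.le, hy.1, lt_of_lt_of_le hy.2 h1⟩)
    rw [hvol, ofReal_cdf]

/-- For any two Borel probability measures `μ`, `ν` on `ℝ` there are
uniformly distributed random variables `X`, `Y` (on possibly different probability spaces)
and a single function `h` on `[0,1]` such that `h ∘ X` is measurable with law `μ` and
`h ∘ Y` is measurable with law `ν`. -/
theorem stmt_0 (μ ν : Measure ℝ) [IsProbabilityMeasure μ] [IsProbabilityMeasure ν] :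
    ∃ (Ω₁ Ω₂ : Type) (_ : MeasurableSpace Ω₁) (_ : MeasurableSpace Ω₂)
      (P₁ : Measure Ω₁) (P₂ : Measure Ω₂),
      IsProbabilityMeasure P₁ ∧ IsProbabilityMeasure P₂ ∧
      ∃ (X : Ω₁ → ℝ) (Y : Ω₂ → ℝ) (h : ℝ → ℝ),
        IsUniformOn01 P₁ X ∧ IsUniformOn01 P₂ Y ∧
        Measurable (h ∘ X) ∧ P₁.map (h ∘ X) = μ ∧
        Measurable (h ∘ Y) ∧ P₂.map (h ∘ Y) = ν := by
  classical
  obtain ⟨φ, hφ⟩ := exists_phi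
  set A : Set ℝ := {x : ℝ | Even ⌊φ x⌋} with hA
  have hA1 : ∀ S : Set ℝ, MeasurableSet S → S ⊆ Aᶜ → volume S = 0 := by
    intro S hS hsub
    refine null_of_parity φ hφ S hS fun x hx y hy => ?_
    have hx' := hsub hx
    have hy' := hsub hy
    simp only [hA, mem_compl_iff, mem_setOf_eq] at hx' hy'
    tauto
  have hA2 : ∀ S : Set ℝ, MeasurableSet S → S ⊆ (Aᶜ)ᶜ → volume S = 0 := by
    intro S hS hsub
    rw [compl_compl] at hsub
    refine null_of_parity φ hφ S hS fun x hx y hy => ?_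
    have hx' := hsub hx
    have hy' := hsub hy
    simp only [hA, mem_setOf_eq] at hx' hy'
    tauto
  obtain ⟨Ω₁, m₁, P₁, X, hP₁, hU₁, hmem₁, hlaw₁⟩ := pack A hA1
  obtain ⟨Ω₂, m₂, P₂, Y, hP₂, hU₂, hmem₂, hlaw₂⟩ := pack Aᶜ hA2
  obtain ⟨gμ, hgμ⟩ := exists_quantile μ
  obtain ⟨gν, hgν⟩ := exists_quantile ν
  set h : ℝ → ℝ := fun x => if x ∈ A then gμ x else gν x with hh
  have hX : h ∘ X = gμ ∘ X := by
    funext ω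
    simp only [Function.comp_apply, hh]
    rw [if_pos (hmem₁ ω).1]
  have hY : h ∘ Y = gν ∘ Y := by
    funext ω
    simp only [Function.comp_apply, hh]
    rw [if_neg (hmem₂ ω).1]
  obtain ⟨hm1, hl1⟩ := hlaw₁ μ inferInstance gμ hgμ
  obtain ⟨hm2, hl2⟩ := hlaw₂ ν inferInstance gν hgν
  exact ⟨Ω₁, Ω₂, m₁, m₂, P₁, P₂, hP₁, hP₂, X, Y, h, hU₁, hU₂,
    hX ▸ hm1, hX ▸ hl1, hY ▸ hm2, hY ▸ hl2⟩
end

section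
/- Let I be an index set whose cardinality is at most that of the continuum, and let (μ_α)_{α ∈ I} be a family of Borel probability measures on ℝ. Then there exist probability spaces (Ω_α, F_α, P_α), uniformly distributed random variables X_α : Ω_α → [0,1], and a single function h : [0,1] → ℝ such that for every α ∈ I the composition h ∘ X_α is measurable and its law (the pushforward of P_α under h ∘ X_α) equals μ_α. -/
open MeasureTheory Set

open ProbabilityTheory Cardinal


/-- Inverse transform sampling: a measurable map pushing Lebesgue on [0,1] to any prob measure. -/
lemma exists_quantile_s1 (μ : Measure ℝ) [IsProbabilityMeasure μ] :
    ∃ g : ℝ → ℝ, Measurable g ∧ (volume.restrict (Icc (0:ℝ) 1)).map g = μ := by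
  set F : StieltjesFunction ℝ := cdf μ with hF
  set g : ℝ → ℝ := fun p => if p ∈ Ioo (0:ℝ) 1 then sInf {x | p ≤ F x} else 0 with hg
  have hne : ∀ p : ℝ, p < 1 → {x | p ≤ F x}.Nonempty := by
    intro p hp
    have := (tendsto_cdf_atTop (μ := μ)).eventually (eventually_ge_nhds hp)
    exact this.exists
  have hbdd : ∀ p : ℝ, 0 < p → BddBelow {x | p ≤ F x} := by
    intro p hp
    have := (tendsto_cdf_atBot (μ := μ)).eventually (eventually_lt_nhds hp)
    obtain ⟨x₀, hx₀⟩ := this.exists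
    exact ⟨x₀, fun y hy => le_of_not_gt fun hlt =>
      absurd (le_trans hy (monotone_cdf (μ:=μ) hlt.le)) (not_le.2 hx₀)⟩
  have galois : ∀ p ∈ Ioo (0:ℝ) 1, ∀ t : ℝ, g p ≤ t ↔ p ≤ F t := by
    rintro p ⟨hp0, hp1⟩ t
    have hgp : g p = sInf {x | p ≤ F x} := by simp [hg, hp0, hp1]
    constructor
    · intro hle
      -- first : p ≤ F (g p)
      have key : p ≤ F (g p) := by
        have h1 : ∀ z ∈ Ioi (g p), p ≤ F z := by
          intro z hz
          rw [hgp] at hz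
          obtain ⟨s, hs, hsz⟩ := exists_lt_of_csInf_lt (hne p hp1) hz
          exact le_trans hs (monotone_cdf (μ:=μ) hsz.le)
        have h2 : Filter.Tendsto F (nhdsWithin (g p) (Ioi (g p))) (nhds (F (g p))) :=
          ((F.right_continuous (g p)).mono Ioi_subset_Ici_self).tendsto
        exact ge_of_tendsto h2 (eventually_nhdsWithin_of_forall h1)
      exact key.trans (monotone_cdf (μ:=μ) hle)
    · intro hpt
      rw [hgp]
      exact csInf_le (hbdd p hp0) hpt
  have hmeas : Measurable g := by
    apply measurable_of_Iic
    intro t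
    by_cases ht : (0:ℝ) ≤ t
    · have : g ⁻¹' Iic t = (Ioo (0:ℝ) 1 ∩ Iic (F t)) ∪ (Ioo (0:ℝ) 1)ᶜ := by
        ext p
        by_cases hp : p ∈ Ioo (0:ℝ) 1
        · simp [hp, mem_Iic, galois p hp t]
        · have hp' : ¬(0 < p ∧ p < 1) := by simpa [mem_Ioo] using hp
          simp [hp, hp', hg, mem_Iic, ht]
      rw [this]
      exact ((measurableSet_Ioo.inter measurableSet_Iic).union measurableSet_Ioo.compl)
    · have : g ⁻¹' Iic t = Ioo (0:ℝ) 1 ∩ Iic (F t) := by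
        ext p
        by_cases hp : p ∈ Ioo (0:ℝ) 1
        · simp [hp, mem_Iic, galois p hp t]
        · have hp' : ¬(0 < p ∧ p < 1) := by simpa [mem_Ioo] using hp
          simp [hp, hp', hg, mem_Iic, ht]
      rw [this]
      exact measurableSet_Ioo.inter measurableSet_Iic
  refine ⟨g, hmeas, ?_⟩
  have : IsProbabilityMeasure (volume.restrict (Icc (0:ℝ) 1)) := by
    constructor; simp [Real.volume_Icc]
  have hmap : IsProbabilityMeasure ((volume.restrict (Icc (0:ℝ) 1)).map g) :=
    Measure.isProbabilityMeasure_map hmeas.aemeasurable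
  refine Measure.ext_of_Iic _ _ (fun t => ?_)
  rw [Measure.map_apply hmeas measurableSet_Iic,
    Measure.restrict_apply (hmeas measurableSet_Iic)]
  have hset : g ⁻¹' Iic t ∩ Ioo (0:ℝ) 1 = Iic (F t) ∩ Ioo (0:ℝ) 1 := by
    ext p
    simp only [mem_inter_iff, mem_preimage, mem_Iic, and_congr_left_iff]
    intro hp
    exact galois p hp t
  have hF0 : 0 ≤ F t := cdf_nonneg μ t
  have hF1 : F t ≤ 1 := cdf_le_one μ t
  have key : volume (g ⁻¹' Iic t ∩ Icc (0:ℝ) 1) = ENNReal.ofReal (F t) := by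
    have h1 : volume (g ⁻¹' Iic t ∩ Icc (0:ℝ) 1) = volume (g ⁻¹' Iic t ∩ Ioo (0:ℝ) 1) := by
      apply le_antisymm
      · calc volume (g ⁻¹' Iic t ∩ Icc (0:ℝ) 1)
            ≤ volume ((g ⁻¹' Iic t ∩ Ioo (0:ℝ) 1) ∪ ({0,1} : Set ℝ)) := by
              apply measure_mono
              rintro x ⟨hx1, hx2⟩
              rcases eq_or_ne x 0 with rfl | h0
              · exact Or.inr (by simp)
              rcases eq_or_ne x 1 with rfl | h1
              · exact Or.inr (by simp)
              exact Or.inl ⟨hx1, lt_of_le_of_ne hx2.1 (Ne.symm h0), lt_of_le_of_ne hx2.2 h1⟩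
          _ ≤ volume (g ⁻¹' Iic t ∩ Ioo (0:ℝ) 1) + volume ({0,1} : Set ℝ) := measure_union_le _ _
          _ = volume (g ⁻¹' Iic t ∩ Ioo (0:ℝ) 1) := by
              have hz : volume ({0,1} : Set ℝ) = 0 :=
                (Set.countable_singleton (1:ℝ)).insert 0 |>.measure_zero _
              simp [hz]
      · exact measure_mono (inter_subset_inter_right _ Ioo_subset_Icc_self)
    rw [h1, hset]
    rcases eq_or_lt_of_le hF1 with hFeq | hFlt
    · rw [show Iic (F t) ∩ Ioo (0:ℝ) 1 = Ioo 0 1 by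
        rw [inter_eq_right]; intro x hx; exact mem_Iic.2 (hx.2.le.trans hFeq.symm.le)]
      simp [Real.volume_Ioo, hFeq]
    · rw [show Iic (F t) ∩ Ioo (0:ℝ) 1 = Ioc 0 (F t) by
        ext x
        simp only [mem_inter_iff, mem_Iic, mem_Ioo, mem_Ioc]
        constructor
        · rintro ⟨h1, h2, h3⟩; exact ⟨h2, h1⟩
        · rintro ⟨h1, h2⟩; exact ⟨h2, h1, lt_of_le_of_lt h2 hFlt⟩]
      simp [Real.volume_Ioc]
  rw [key, ofReal_cdf]


lemma thick_inter (A : Set ℝ) (hA : A ⊆ Icc 0 1) (h1 : volume A = 1)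
    {B : Set ℝ} (hB : MeasurableSet B) : volume (A ∩ B) = volume (Icc (0:ℝ) 1 ∩ B) := by
  refine le_antisymm (measure_mono (inter_subset_inter_left _ hA)) ?_
  have key := measure_inter_add_diff (μ := volume) A hB
  have key2 := measure_inter_add_diff (μ := volume) (Icc (0:ℝ) 1) hB
  rw [h1] at key
  rw [Real.volume_Icc] at key2
  simp only [sub_zero, ENNReal.ofReal_one] at key2
  have hd : volume (A \ B) ≤ volume (Icc (0:ℝ) 1 \ B) :=
    measure_mono (diff_subset_diff_left hA)
  have hfin : volume (Icc (0:ℝ) 1 \ B) ≠ ⊤ := by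
    intro h; rw [h] at key2; simp at key2
  -- volume (Icc ∩ B) + volume (Icc \ B) = 1 = volume (A ∩ B) + volume (A \ B)
  have : volume (Icc (0:ℝ) 1 ∩ B) + volume (Icc (0:ℝ) 1 \ B)
      ≤ volume (A ∩ B) + volume (Icc (0:ℝ) 1 \ B) := by
    rw [key2, ← key]
    exact add_le_add_right hd _
  exact ENNReal.le_of_add_le_add_right hfin this

/-- The trace measure on a subset `A ⊆ [0,1]` of full outer measure. -/
noncomputable def traceMeasure (A : Set ℝ) : Measure A :=
  ((volume : Measure ℝ).toOuterMeasure.comap (Subtype.val : A → ℝ)).toMeasure (by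
    intro s hs
    obtain ⟨B, hB, rfl⟩ := hs
    rw [OuterMeasure.isCaratheodory_iff]
    intro t
    simp only [OuterMeasure.comap_apply, Measure.toOuterMeasure_apply]
    have h1 : Subtype.val '' (t ∩ Subtype.val ⁻¹' B) = (Subtype.val '' t) ∩ B := by
      rw [Set.image_inter Subtype.val_injective, Set.image_preimage_eq_inter_range,
        Subtype.range_val]
      ext x; constructor
      · rintro ⟨h1, h2, h3⟩; exact ⟨h1, h2⟩
      · rintro ⟨⟨y, hy, rfl⟩, h2⟩; exact ⟨⟨y, hy, rfl⟩, h2, y.2⟩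
    have h2 : Subtype.val '' (t \ Subtype.val ⁻¹' B) = (Subtype.val '' t) \ B := by
      rw [Set.image_diff Subtype.val_injective, Set.image_preimage_eq_inter_range,
        Subtype.range_val]
      ext x; constructor
      · rintro ⟨h1, h2⟩; exact ⟨h1, fun hb => h2 ⟨hb, by rcases h1 with ⟨y,_,rfl⟩; exact y.2⟩⟩
      · rintro ⟨h1, h2⟩; exact ⟨h1, fun hb => h2 hb.1⟩
    rw [h1, h2, measure_inter_add_diff (μ := volume) _ hB])

lemma traceMeasure_apply (A : Set ℝ) {s : Set A} (hs : MeasurableSet s) :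
    traceMeasure A s = volume (Subtype.val '' s) := by
  rw [traceMeasure, toMeasure_apply _ _ hs]
  simp [OuterMeasure.comap_apply]

lemma traceMeasure_prob (A : Set ℝ) (h1 : volume A = 1) :
    IsProbabilityMeasure (traceMeasure A) := by
  constructor
  rw [traceMeasure_apply A MeasurableSet.univ, Set.image_univ, Subtype.range_val, h1]

lemma traceMeasure_map (A : Set ℝ) (hA : A ⊆ Icc 0 1) (h1 : volume A = 1)
    {g : ℝ → ℝ} (hg : Measurable g) :
    (traceMeasure A).map (g ∘ Subtype.val) = (volume.restrict (Icc (0:ℝ) 1)).map g := by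
  have hmv : Measurable (Subtype.val : A → ℝ) := measurable_subtype_coe
  refine Measure.ext (fun B hB => ?_)
  rw [Measure.map_apply (hg.comp hmv) hB, Measure.map_apply hg hB,
    Measure.restrict_apply (hg hB)]
  have hpre : (g ∘ Subtype.val) ⁻¹' B = (Subtype.val : A → ℝ) ⁻¹' (g ⁻¹' B) := rfl
  rw [hpre, traceMeasure_apply A (hmv (hg hB)),
    Set.image_preimage_eq_inter_range, Subtype.range_val, Set.inter_comm,
    thick_inter A hA h1 (hg hB), Set.inter_comm]

lemma traceMeasure_map_val (A : Set ℝ) (hA : A ⊆ Icc 0 1) (h1 : volume A = 1) :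
    (traceMeasure A).map Subtype.val = volume.restrict (Icc (0:ℝ) 1) := by
  have := traceMeasure_map A hA h1 measurable_id
  simpa [Measure.map_id] using this


lemma continuum_le_mk_closed {K : Set ℝ} (hK : IsClosed K) (hunc : ¬K.Countable) :
    Cardinal.continuum ≤ #K := by
  obtain ⟨D, hD, hDne, hDK⟩ := exists_perfect_nonempty_of_isClosed_of_not_countable hK hunc
  obtain ⟨f, hrange, -, hinj⟩ := hD.exists_nat_bool_injection hDne
  have : Cardinal.continuum = #(ℕ → Bool) := by
    simp [Cardinal.mk_arrow, Cardinal.mk_bool, Cardinal.two_power_aleph0]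
  rw [this]
  exact Cardinal.mk_le_of_injective (f := fun x => (⟨f x, hDK (hrange (mem_range_self x))⟩ : K))
    (fun a b hab => hinj (congrArg Subtype.val hab))

lemma mk_closed_sets_le :
    #{K : Set ℝ // IsClosed K ∧ K ⊆ Icc 0 1 ∧ 0 < volume K} ≤ Cardinal.continuum := by
  have hinj : Function.Injective
      (fun K : {K : Set ℝ // IsClosed K ∧ K ⊆ Icc 0 1 ∧ 0 < volume K} =>
        (fun q : ℚ => Metric.infDist (q : ℝ) K.1)) := by
    intro K L hKL
    have hKne : K.1.Nonempty := nonempty_of_measure_ne_zero K.2.2.2.ne'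
    have hLne : L.1.Nonempty := nonempty_of_measure_ne_zero L.2.2.2.ne'
    have heq : (fun x : ℝ => Metric.infDist x K.1) = fun x => Metric.infDist x L.1 := by
      apply Continuous.ext_on Rat.denseRange_cast
        (Metric.continuous_infDist_pt _) (Metric.continuous_infDist_pt _)
      rintro x ⟨q, rfl⟩
      exact congrFun hKL q
    apply Subtype.ext
    ext x
    rw [K.2.1.mem_iff_infDist_zero hKne, L.2.1.mem_iff_infDist_zero hLne, congrFun heq x]
  calc #{K : Set ℝ // IsClosed K ∧ K ⊆ Icc 0 1 ∧ 0 < volume K} ≤ #(ℚ → ℝ) :=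
        Cardinal.mk_le_of_injective hinj
    _ = Cardinal.continuum := by
        simp [Cardinal.mk_arrow, Cardinal.mkRat, Cardinal.mk_denumerable, Cardinal.mk_real,
          Cardinal.continuum_power_aleph0]



lemma exists_thick_disjoint_family (I : Type) [Nonempty I] (hI : #I ≤ Cardinal.continuum) :
    ∃ A : I → Set ℝ, (∀ α, A α ⊆ Icc 0 1) ∧
      (∀ α β, α ≠ β → Disjoint (A α) (A β)) ∧ (∀ α, volume (A α) = 1) := by
  set S := {K : Set ℝ // IsClosed K ∧ K ⊆ Icc 0 1 ∧ 0 < volume K} with hS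
  have hSne : Nonempty S :=
    ⟨⟨Icc 0 1, isClosed_Icc, subset_rfl, by simp [Real.volume_Icc]⟩⟩
  set σ := Cardinal.continuum.ord.ToType with hσ
  have hmkσ : #σ = Cardinal.continuum := Cardinal.mk_ord_toType _
  have hcard : #(S × I) ≤ #σ := by
    rw [hmkσ, Cardinal.mk_prod, Cardinal.lift_id, Cardinal.lift_id]
    calc #S * #I ≤ Cardinal.continuum * Cardinal.continuum :=
          mul_le_mul' mk_closed_sets_le hI
      _ = Cardinal.continuum := Cardinal.mul_eq_self Cardinal.aleph0_le_continuum
  obtain ⟨j⟩ := Cardinal.le_def _ _ |>.1 hcard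
  set e : σ → S × I := Function.invFun j with he'
  have he : Function.Surjective e := Function.invFun_surjective j.injective
  -- each closed positive-measure set has at least continuum many points
  have hKcard : ∀ K : S, Cardinal.continuum ≤ #K.1 := by
    intro K
    apply continuum_le_mk_closed K.2.1
    intro hct
    exact absurd (hct.measure_zero volume) K.2.2.2.ne'
  -- the recursion step always has a fresh point available
  have hstep : ∀ (i : σ) (rec : ∀ j : σ, j < i → ℝ),
      ((e i).1.1 \ {x | ∃ j, ∃ hj : j < i, rec j hj = x}).Nonempty := by
    intro i rec
    by_contra hemp
    rw [not_nonempty_iff_eq_empty, diff_eq_empty] at hemp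
    have h1 : #((e i).1.1) ≤ #{x | ∃ j, ∃ hj : j < i, rec j hj = x} :=
      Cardinal.mk_le_mk_of_subset hemp
    have h2 : #{x | ∃ j, ∃ hj : j < i, rec j hj = x} ≤ #{j : σ // j < i} := by
      apply Cardinal.mk_le_of_surjective
        (f := fun p : {j : σ // j < i} =>
          (⟨rec p.1 p.2, ⟨p.1, p.2, rfl⟩⟩ : {x | ∃ j, ∃ hj : j < i, rec j hj = x}))
      rintro ⟨x, jj, hj, rfl⟩
      exact ⟨⟨jj, hj⟩, rfl⟩
    have h3 : #{j : σ // j < i} < Cardinal.continuum :=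
      Cardinal.mk_Iio_ord_toType i
    exact absurd ((hKcard (e i).1).trans (h1.trans h2)) (not_le.2 h3)
  set f : σ → ℝ := WellFoundedLT.fix (motive := fun _ => ℝ)
    (fun i rec => (hstep i rec).some) with hf
  have hfix : ∀ i, f i = (hstep i (fun j _ => f j)).some :=
    WellFoundedLT.fix_eq (fun i rec => (hstep i rec).some)
  have hprop : ∀ i, f i ∈ (e i).1.1 ∧ ∀ j, j < i → f j ≠ f i := by
    intro i
    have h := (hstep i (fun j _ => f j)).some_mem
    rw [← hfix i] at h
    exact ⟨h.1, fun j hj hne => h.2 ⟨j, hj, hne⟩⟩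
  have hinj : Function.Injective f := by
    intro a b hab
    by_contra hne
    rcases lt_or_gt_of_ne hne with hlt | hlt
    · exact (hprop b).2 a hlt hab
    · exact (hprop a).2 b hlt hab.symm
  refine ⟨fun α => f '' {i | (e i).2 = α}, ?_, ?_, ?_⟩
  · rintro α x ⟨i, hi, rfl⟩
    exact (e i).1.2.2.1 (hprop i).1
  · intro α β hαβ
    rw [Set.disjoint_left]
    rintro x ⟨i, hi, rfl⟩ ⟨k, hk, hfk⟩
    exact hαβ (hi ▸ hk ▸ congrArg (fun i => (e i).2) (hinj hfk).symm)
  · intro α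
    set A := f '' {i | (e i).2 = α} with hA
    have hsub : A ⊆ Icc 0 1 := by
      rintro x ⟨i, hi, rfl⟩
      exact (e i).1.2.2.1 (hprop i).1
    have hle : volume A ≤ 1 := by
      have := measure_mono (μ := volume) hsub
      rwa [Real.volume_Icc, sub_zero, ENNReal.ofReal_one] at this
    rcases eq_or_lt_of_le hle with heq | hlt
    · exact heq
    exfalso
    set T := toMeasurable volume A with hT
    have hTmeas : MeasurableSet T := measurableSet_toMeasurable _ _
    have hAT : A ⊆ T := subset_toMeasurable _ _
    have hvolT : volume T = volume A := measure_toMeasurable _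
    set B := Icc (0:ℝ) 1 \ T with hB
    have hBmeas : MeasurableSet B := measurableSet_Icc.diff hTmeas
    have hBpos : volume B ≠ 0 := by
      intro h0
      have h1 := measure_inter_add_diff (μ := volume) (Icc (0:ℝ) 1) hTmeas
      rw [← hB] at h1  -- ?
      have : volume (Icc (0:ℝ) 1) ≤ volume A := by
        calc volume (Icc (0:ℝ) 1) = volume (Icc (0:ℝ) 1 ∩ T) + volume B := by
              rw [h1]
          _ = volume (Icc (0:ℝ) 1 ∩ T) := by rw [h0, add_zero]
          _ ≤ volume T := measure_mono inter_subset_right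
          _ = volume A := hvolT
      rw [Real.volume_Icc, sub_zero, ENNReal.ofReal_one] at this
      exact absurd this (not_le.2 hlt)
    have hBfin : volume B ≠ ⊤ := by
      have : volume B ≤ volume (Icc (0:ℝ) 1) := measure_mono diff_subset
      rw [Real.volume_Icc, sub_zero, ENNReal.ofReal_one] at this
      exact (this.trans_lt ENNReal.one_lt_top).ne
    obtain ⟨K, hKB, hKcomp, hKlt⟩ := hBmeas.exists_isCompact_lt_add hBfin hBpos
    have hKpos : 0 < volume K := by
      by_contra h
      rw [not_lt, le_zero_iff] at h
      rw [h, zero_add] at hKlt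
      exact absurd hKlt (lt_irrefl _)
    obtain ⟨i, hi⟩ := he (⟨K, hKcomp.isClosed, hKB.trans (diff_subset.trans subset_rfl), hKpos⟩, α)
    have h1 : f i ∈ K := by
      have := (hprop i).1
      rw [hi] at this
      exact this
    have h2 : f i ∈ A := ⟨i, show (e i).2 = α by rw [hi], rfl⟩
    exact (hKB h1).2 (hAT h2)

/-- For an index set `I` of cardinality at most the continuum and a family
of Borel probability measures `μ α` on `ℝ`, there are uniformly distributed random variables
`X α` and a single function `h` on `[0,1]` such that each `h ∘ X α` is measurable with
law `μ α`. -/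
theorem stmt_1 (I : Type) (hI : Cardinal.mk I ≤ Cardinal.continuum)
    (μ : I → Measure ℝ) (hμ : ∀ α, IsProbabilityMeasure (μ α)) :
    ∃ (Ω : I → Type) (_ : ∀ α, MeasurableSpace (Ω α)) (P : ∀ α, Measure (Ω α))
      (X : ∀ α, Ω α → ℝ) (h : ℝ → ℝ),
      ∀ α, IsProbabilityMeasure (P α) ∧ IsUniformOn01 (P α) (X α) ∧
        Measurable (h ∘ X α) ∧ (P α).map (h ∘ X α) = μ α := by
  by_cases hempty : IsEmpty I
  · exact ⟨fun _ => PUnit, fun _ => inferInstance, fun α => hempty.elim α,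
      fun α => hempty.elim α, 0, fun α => hempty.elim α⟩
  · have : Nonempty I := not_isEmpty_iff.1 hempty
    obtain ⟨A, hsub, hdisj, hvol⟩ := exists_thick_disjoint_family I hI
    choose g hgmeas hgmap using fun α => @exists_quantile_s1 (μ α) (hμ α)
    classical
    set h : ℝ → ℝ := fun x => if hx : ∃ α, x ∈ A α then g (Classical.choose hx) x else 0
      with hhdef
    have hh : ∀ (α : I) (x : ℝ), x ∈ A α → h x = g α x := by
      intro α x hx
      have hex : ∃ β, x ∈ A β := ⟨α, hx⟩
      have hcs := Classical.choose_spec hex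
      have hca : Classical.choose hex = α := by
        by_contra hne
        exact (Set.disjoint_left.1 (hdisj _ _ hne) hcs) hx
      simp only [hhdef, dif_pos hex, hca]
    refine ⟨fun α => ↥(A α), fun α => inferInstance, fun α => traceMeasure (A α),
      fun α => Subtype.val, h, fun α => ?_⟩
    have hcomp : h ∘ (Subtype.val : A α → ℝ) = g α ∘ Subtype.val := by
      funext ω
      exact hh α ω.1 ω.2
    refine ⟨traceMeasure_prob (A α) (hvol α),
      ⟨measurable_subtype_coe, ?_, traceMeasure_map_val (A α) (hsub α) (hvol α)⟩, ?_, ?_⟩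
    · rintro x ⟨ω, rfl⟩
      exact hsub α ω.2
    · rw [hcomp]
      exact (hgmeas α).comp measurable_subtype_coe
    · rw [hcomp, traceMeasure_map (A α) (hsub α) (hvol α) (hgmeas α), hgmap α]
end

section
/- Let I be an index set whose cardinality is at most that of the continuum. Then there exists a family of probability spaces (Ω_α, F_α, P_α)_{α ∈ I} and uniformly distributed random variables X_α : Ω_α → [0,1] such that the ranges are pairwise disjoint: X_α(Ω_α) ∩ X_β(Ω_β) = ∅ whenever α ≠ β. -/
open MeasureTheory Set

/-- Injective choice from continuum-sized sets over a small index type. -/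
lemma exists_injective_choice {J : Type} (A : J → Set ℝ)
    (hJ : Cardinal.mk J ≤ Cardinal.continuum)
    (hA : ∀ j, Cardinal.continuum ≤ Cardinal.mk (A j)) :
    ∃ f : J → ℝ, Function.Injective f ∧ ∀ j, f j ∈ A j := by
  classical
  set O := Cardinal.continuum.{0}.ord.ToType with hO
  have hOcard : Cardinal.mk O = Cardinal.continuum := by
    rw [hO, Cardinal.mk_toType, Cardinal.card_ord]
  obtain ⟨e⟩ : Nonempty (J ↪ O) := by
    rw [← Cardinal.le_def, hOcard]; exact hJ
  set B : O → Set ℝ := fun x => if h : ∃ j, e j = x then A h.choose else Set.univ with hB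
  have hBcard : ∀ x, Cardinal.continuum ≤ Cardinal.mk (B x) := by
    intro x
    by_cases h : ∃ j, e j = x
    · simp only [hB, dif_pos h]; exact hA _
    · simp only [hB, dif_neg h]
      rw [Cardinal.mk_univ, Cardinal.mk_real]
  have key : ∀ (x : O) (p : Set.Iio x → ℝ), (B x \ Set.range p).Nonempty := by
    intro x p
    rw [Set.nonempty_iff_ne_empty]
    intro h
    have hsub : B x ⊆ Set.range p := by rwa [Set.diff_eq_empty] at h
    have h1 : Cardinal.mk (B x) ≤ Cardinal.mk (Set.range p) :=
      Cardinal.mk_le_mk_of_subset hsub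
    have h2 : Cardinal.mk (Set.range p) ≤ Cardinal.mk (Set.Iio x) := Cardinal.mk_range_le
    have h3 : Cardinal.mk (Set.Iio x) < Cardinal.continuum := Cardinal.mk_Iio_ord_toType x
    exact absurd ((hBcard x).trans (h1.trans h2)) (not_le.mpr h3)
  set g : O → ℝ := WellFounded.fix wellFounded_lt
    (fun x ih => (key x (fun y : Set.Iio x => ih y y.2)).choose) with hg
  have hgx : ∀ x, g x ∈ B x \ Set.range (fun y : Set.Iio x => g y) := by
    intro x
    rw [hg, WellFounded.fix_eq]
    exact (key x _).choose_spec
  have ginj : Function.Injective g := by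
    intro x y hxy
    by_contra hne
    rcases lt_or_gt_of_ne hne with h | h
    · exact (hgx y).2 ⟨⟨x, h⟩, hxy⟩
    · exact (hgx x).2 ⟨⟨y, h⟩, hxy.symm⟩
  refine ⟨fun j => g (e j), fun a b hab => e.injective (ginj hab), fun j => ?_⟩
  have h : ∃ j', e j' = e j := ⟨j, rfl⟩
  have hBj : B (e j) = A j := by
    rw [hB]; simp only [dif_pos h]
    have : h.choose = j := e.injective h.choose_spec
    rw [this]
  rw [← hBj]
  exact (hgx (e j)).1


lemma trace_measure (S : Set ℝ) (hsub : S ⊆ Set.Icc 0 1)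
    (hhit : ∀ F : Set ℝ, IsClosed F → F ⊆ Set.Icc 0 1 → 0 < volume F → (S ∩ F).Nonempty) :
    ∃ P : Measure ↥S, IsProbabilityMeasure P ∧ IsUniformOn01 P (Subtype.val : ↥S → ℝ) := by
  have hIcc : volume (Set.Icc (0:ℝ) 1) = 1 := by simp [Real.volume_Icc]
  -- S has full outer measure in [0,1]
  have hS1 : volume S = 1 := by
    obtain ⟨E, hSE, hEm, hEvol⟩ := exists_measurable_superset volume S
    set E' := E ∩ Set.Icc 0 1 with hE'def
    have hSE' : S ⊆ E' := fun x hx => ⟨hSE hx, hsub hx⟩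
    have hE'm : MeasurableSet E' := hEm.inter measurableSet_Icc
    have hE'vol : volume E' = volume S :=
      le_antisymm (le_trans (measure_mono inter_subset_left) hEvol.le) (measure_mono hSE')
    by_contra hne
    have hlt : volume S < 1 := lt_of_le_of_ne (hIcc ▸ measure_mono hsub) hne
    have hE'fin : volume E' ≠ ⊤ := by
      rw [hE'vol]; exact (hlt.trans ENNReal.one_lt_top).ne
    have hdiffpos : volume (Set.Icc (0:ℝ) 1 \ E') ≠ 0 := by
      rw [measure_diff inter_subset_right hE'm.nullMeasurableSet hE'fin, hIcc, hE'vol]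
      intro h0
      rw [tsub_eq_zero_iff_le] at h0
      exact absurd h0 (not_le.mpr hlt)
    have hdfin : volume (Set.Icc (0:ℝ) 1 \ E') ≠ ⊤ :=
      ((measure_mono diff_subset).trans_lt (hIcc ▸ ENNReal.one_lt_top)).ne
    obtain ⟨F, hFsub, hFc, hFlt⟩ :=
      (measurableSet_Icc.diff hE'm).exists_isClosed_lt_add hdfin hdiffpos
    have hFpos : 0 < volume F := by
      by_contra h
      rw [not_lt, le_zero_iff] at h
      rw [h, zero_add] at hFlt
      exact lt_irrefl _ hFlt
    obtain ⟨x, hxS, hxF⟩ := hhit F hFc (hFsub.trans diff_subset) hFpos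
    exact (hFsub hxF).2 (hSE' hxS)
  have hfull : ∀ E : Set ℝ, MeasurableSet E →
      volume (S ∩ E) = volume (Set.Icc (0:ℝ) 1 ∩ E) := by
    intro E hE
    have h1 : volume (S ∩ E) + volume (S \ E) = 1 := by
      rw [measure_inter_add_diff S hE, hS1]
    have h2 : volume (Set.Icc (0:ℝ) 1 ∩ E) + volume (Set.Icc (0:ℝ) 1 \ E) = 1 := by
      rw [measure_inter_add_diff _ hE, hIcc]
    have ha : volume (S ∩ E) ≤ volume (Set.Icc (0:ℝ) 1 ∩ E) :=
      measure_mono (inter_subset_inter_left E hsub)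
    have hb : volume (S \ E) ≤ volume (Set.Icc (0:ℝ) 1 \ E) :=
      measure_mono (diff_subset_diff_left hsub)
    have hbfin : volume (S \ E) ≠ ⊤ := by
      intro h; rw [h] at h1; simp at h1
    have hb'fin : volume (Set.Icc (0:ℝ) 1 \ E) ≠ ⊤ := by
      intro h; rw [h] at h2; simp at h2
    have e1 : volume (S ∩ E) = 1 - volume (S \ E) := ENNReal.eq_sub_of_add_eq hbfin h1
    have e2 : volume (Set.Icc (0:ℝ) 1 ∩ E) = 1 - volume (Set.Icc (0:ℝ) 1 \ E) :=
      ENNReal.eq_sub_of_add_eq hb'fin h2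
    refine le_antisymm ha ?_
    rw [e1, e2]
    exact tsub_le_tsub_left hb 1
  -- the trace outer measure on S
  set ν : OuterMeasure ↥S := OuterMeasure.comap (Subtype.val) volume.toOuterMeasure with hν
  have hνapp : ∀ t : Set ↥S, ν t = volume (Subtype.val '' t) := by
    intro t
    rw [hν, OuterMeasure.comap_apply]
    rfl
  have hcar : (Subtype.instMeasurableSpace : MeasurableSpace ↥S) ≤ ν.caratheodory := by
    intro s hs
    obtain ⟨E, hE, rfl⟩ := hs
    rw [OuterMeasure.isCaratheodory_iff]
    intro t
    rw [hνapp, hνapp, hνapp, Set.image_inter_preimage, Set.image_diff_preimage,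
      measure_inter_add_diff (Subtype.val '' t) hE]
  set P := ν.toMeasure hcar with hP
  have hPE : ∀ E : Set ℝ, MeasurableSet E →
      P (Subtype.val ⁻¹' E) = volume (Set.Icc (0:ℝ) 1 ∩ E) := by
    intro E hE
    rw [hP, toMeasure_apply _ _ (measurable_subtype_coe hE), hνapp,
      Subtype.image_preimage_coe S E, hfull E hE]
  have hprob : IsProbabilityMeasure P := by
    constructor
    have huniv : (Set.univ : Set ↥S) = Subtype.val ⁻¹' Set.univ := rfl
    rw [huniv, hPE _ MeasurableSet.univ, Set.inter_univ, hIcc]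
  refine ⟨P, hprob, measurable_subtype_coe, ?_, ?_⟩
  · rw [Subtype.range_coe]; exact hsub
  · refine Measure.ext fun E hE => ?_
    rw [Measure.map_apply measurable_subtype_coe hE, hPE E hE, Measure.restrict_apply hE,
      Set.inter_comm]

lemma exists_disjoint_full_family (I : Type) (hI : Cardinal.mk I ≤ Cardinal.continuum) :
    ∃ S : I → Set ℝ, (∀ α, S α ⊆ Set.Icc 0 1) ∧
      (∀ α, ∀ F : Set ℝ, IsClosed F → F ⊆ Set.Icc 0 1 → 0 < volume F → (S α ∩ F).Nonempty) ∧
      (∀ α β, α ≠ β → S α ∩ S β = ∅) := by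
  classical
  set A : (ℕ → ℝ) × I → Set ℝ := fun p =>
    if closure (Set.range p.1) ⊆ Set.Icc 0 1 ∧ 0 < volume (closure (Set.range p.1)) then
      closure (Set.range p.1) else Set.Icc 0 1 with hAdef
  have hJ : Cardinal.mk ((ℕ → ℝ) × I) ≤ Cardinal.continuum := by
    rw [Cardinal.mk_prod, Cardinal.lift_id, Cardinal.lift_id]
    have h1 : Cardinal.mk (ℕ → ℝ) = Cardinal.continuum := by
      rw [Cardinal.mk_arrow, Cardinal.lift_id, Cardinal.lift_id, Cardinal.mk_real,
        Cardinal.mk_nat, Cardinal.continuum_power_aleph0]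
    rw [h1]
    calc Cardinal.continuum * Cardinal.mk I ≤ Cardinal.continuum * Cardinal.continuum :=
          mul_le_mul_right hI _
      _ = Cardinal.continuum := Cardinal.continuum_mul_self
  have hA : ∀ p, Cardinal.continuum ≤ Cardinal.mk (A p) := by
    intro p
    rw [hAdef]
    dsimp only
    split_ifs with h
    · obtain ⟨hsub', hpos⟩ := h
      have hunc : ¬(closure (Set.range p.1)).Countable := by
        intro hc
        exact absurd (hc.measure_zero volume) hpos.ne'
      obtain ⟨f, hfr, _, hfinj⟩ :=
        isClosed_closure.exists_nat_bool_injection_of_not_countable hunc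
      have hcb : Cardinal.mk (ℕ → Bool) = Cardinal.continuum := by
        rw [Cardinal.mk_arrow, Cardinal.lift_id, Cardinal.lift_id, Cardinal.mk_bool,
          Cardinal.mk_nat, Cardinal.two_power_aleph0]
      rw [← hcb]
      exact Cardinal.mk_le_of_injective (f := fun n : ℕ → Bool =>
        (⟨f n, hfr (Set.mem_range_self n)⟩ : ↥(closure (Set.range p.1))))
        fun a b hab => hfinj (congrArg Subtype.val hab)
    · rw [Cardinal.mk_Icc_real zero_lt_one]
  obtain ⟨f, hfinj, hfmem⟩ := exists_injective_choice A hJ hA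
  refine ⟨fun α => Set.range (fun u : ℕ → ℝ => f (u, α)), ?_, ?_, ?_⟩
  · rintro α x ⟨u, rfl⟩
    have h := hfmem (u, α)
    rw [hAdef] at h
    dsimp only at h
    split_ifs at h with hc
    · exact hc.1 h
    · exact h
  · intro α F hFc hFsub hFpos
    have hFne : F.Nonempty := by
      rw [Set.nonempty_iff_ne_empty]
      intro h
      rw [h] at hFpos
      simp at hFpos
    have : Nonempty ↥F := hFne.to_subtype
    obtain ⟨s, hsc, hsd⟩ := TopologicalSpace.exists_countable_dense ↥F
    have hsne : s.Nonempty := hsd.nonempty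
    set c := Subtype.val '' s with hcdef
    have hcc : c.Countable := hsc.image _
    have hcsub : c ⊆ F := by rintro x ⟨y, _, rfl⟩; exact y.2
    have hFcl : closure c = F := by
      refine le_antisymm (hFc.closure_subset_iff.mpr hcsub) ?_
      intro x hx
      have h1 : Subtype.val '' (closure s) ⊆ closure c :=
        (image_closure_subset_closure_image continuous_subtype_val)
      have h2 : (⟨x, hx⟩ : ↥F) ∈ closure s := hsd _
      exact h1 ⟨⟨x, hx⟩, h2, rfl⟩
    obtain ⟨u, hu⟩ := hcc.exists_eq_range (hsne.image _)
    have hclu : closure (Set.range u) = F := by rw [← hu, hFcl]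
    have hcond : closure (Set.range u) ⊆ Set.Icc 0 1 ∧ 0 < volume (closure (Set.range u)) := by
      rw [hclu]; exact ⟨hFsub, hFpos⟩
    have hmem := hfmem (u, α)
    rw [hAdef] at hmem
    dsimp only at hmem
    rw [if_pos hcond] at hmem
    exact ⟨f (u, α), ⟨u, rfl⟩, hclu ▸ hmem⟩
  · intro α β hab
    rw [Set.eq_empty_iff_forall_notMem]
    rintro x ⟨⟨u, hu⟩, ⟨v, hv⟩⟩
    exact hab (congrArg Prod.snd (hfinj (hu.trans hv.symm)))

/-- For any index set `I` of cardinality at most the continuum there is a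
family of uniformly distributed random variables `X α` (on probability spaces `Ω α`) with
pairwise disjoint ranges. -/
theorem stmt_3 (I : Type) (hI : Cardinal.mk I ≤ Cardinal.continuum) :
    ∃ (Ω : I → Type) (_ : ∀ α, MeasurableSpace (Ω α)) (P : ∀ α, Measure (Ω α))
      (X : ∀ α, Ω α → ℝ),
      (∀ α, IsProbabilityMeasure (P α)) ∧ (∀ α, IsUniformOn01 (P α) (X α)) ∧
      ∀ α β, α ≠ β → Set.range (X α) ∩ Set.range (X β) = ∅ := by
  obtain ⟨S, hSsub, hShit, hSdisj⟩ := exists_disjoint_full_family I hI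
  choose P hP1 hP2 using fun α => trace_measure (S α) (hSsub α) (hShit α)
  refine ⟨fun α => ↥(S α), fun α => Subtype.instMeasurableSpace, P,
    fun α => Subtype.val, hP1, hP2, fun α β hab => ?_⟩
  rw [Subtype.range_coe, Subtype.range_coe]
  exact hSdisj α β hab
end

section
/- There exists a family of probability spaces (Ω_α, F_α, P_α)_{α ∈ [0,1]} and uniformly distributed random variables X_α : Ω_α → [0,1] such that for all α ≠ β in [0,1], the Lebesgue inner measure of X_α(Ω_α) ∩ X_β(Ω_β) equals min(α, β) and the Lebesgue outer measure of X_α(Ω_α) ∩ X_β(Ω_β) equals max(α, β). -/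
open MeasureTheory Set

/-- Lebesgue inner measure of a set `S ⊆ ℝ`: the supremum of the Lebesgue measures of
Borel sets contained in `S`. -/
noncomputable def lebesgueInner (S : Set ℝ) : ENNReal :=
  ⨆ (T : Set ℝ) (_ : MeasurableSet T) (_ : T ⊆ S), volume T

namespace Stmt4Aux

open Cardinal

/-- Injective choice function from a family of "large" sets. -/
lemma exists_injective_selection {ι : Type} (F : ι → Set ℝ)
    (hF : ∀ i, #ι ≤ #(F i)) :
    ∃ f : ι → ℝ, Function.Injective f ∧ ∀ i, f i ∈ F i := by
  obtain ⟨r, wo, hr⟩ := Cardinal.ord_eq ι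
  haveI := wo
  have key : ∀ (i : ι) (g : ∀ j, r j i → ℝ), ∃ x, x ∈ F i ∧ ∀ (j) (h : r j i), g j h ≠ x := by
    intro i g
    by_contra hcon
    push_neg at hcon
    have hsub : F i ⊆ range (fun j : {j // r j i} => g j.1 j.2) := by
      intro x hx
      obtain ⟨j, h, hx'⟩ := hcon x hx
      exact ⟨⟨j, h⟩, hx'⟩
    have h1 : #(F i) ≤ #{j // r j i} := (mk_le_mk_of_subset hsub).trans mk_range_le
    have h2 : #{j // r j i} < #ι := by
      have := Cardinal.card_typein_lt (r := r) i hr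
      rwa [Ordinal.card_typein (r := r) i] at this
    exact absurd (hF i) (not_le.2 (lt_of_le_of_lt h1 h2))
  have wf : WellFounded r := IsWellFounded.wf
  let f : ι → ℝ := wf.fix (C := fun _ => ℝ) (fun i g => Classical.choose (key i g))
  have hfix : ∀ i, f i = Classical.choose (key i (fun j _ => f j)) := fun i =>
    wf.fix_eq _ i
  have hspec : ∀ i, f i ∈ F i ∧ ∀ (j) (_ : r j i), f j ≠ f i := by
    intro i
    have := Classical.choose_spec (key i (fun j _ => f j))
    rw [← hfix i] at this
    exact this
  refine ⟨f, ?_, fun i => (hspec i).1⟩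
  intro i j hij
  by_contra hne
  rcases trichotomous_of r i j with h | h | h
  · exact (hspec j).2 i h hij
  · exact hne h
  · exact (hspec i).2 j h hij.symm

/-- The closed set of reals coded by a set of pairs of rationals. -/
def codeSet (c : Set (ℚ × ℚ)) : Set ℝ := (⋃ pq ∈ c, Ioo (pq.1 : ℝ) (pq.2 : ℝ))ᶜ

lemma isClosed_codeSet (c : Set (ℚ × ℚ)) : IsClosed (codeSet c) :=
  (isOpen_biUnion fun _ _ => isOpen_Ioo).isClosed_compl

lemma exists_codeSet {F : Set ℝ} (hF : IsClosed F) : ∃ c, codeSet c = F := by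
  refine ⟨{pq | Ioo (pq.1 : ℝ) (pq.2 : ℝ) ⊆ Fᶜ}, ?_⟩
  unfold codeSet
  rw [compl_eq_comm]
  apply le_antisymm
  · intro x hx
    obtain ⟨v, hv, hxv, hvF⟩ := Real.isTopologicalBasis_Ioo_rat.exists_subset_of_mem_open hx
      hF.isOpen_compl
    simp only [mem_iUnion] at hv
    obtain ⟨a, b, _, rfl⟩ := hv
    exact mem_biUnion (show ((a, b) : ℚ × ℚ) ∈ _ from hvF) hxv
  · exact iUnion₂_subset fun pq hpq => hpq

lemma continuum_le_mk_of_pos {F : Set ℝ} (hF : IsClosed F) (hpos : 0 < volume F) : 𝔠 ≤ #F := by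
  have hunc : ¬ F.Countable := by
    intro h
    simp [h.measure_zero volume] at hpos
  obtain ⟨f, hrange, -, hinj⟩ := hF.exists_nat_bool_injection_of_not_countable hunc
  have h1 : #(ℕ → Bool) ≤ #F :=
    mk_le_of_injective (f := fun x => (⟨f x, hrange (mem_range_self x)⟩ : F))
      (fun a b hab => hinj (congrArg Subtype.val hab))
  have h2 : #(ℕ → Bool) = 𝔠 := by
    rw [mk_arrow]
    simp [mk_bool, two_power_aleph0]
  rwa [h2] at h1

/-- A set meeting every closed set of positive Lebesgue measure. -/
def MeetsPos (D : Set ℝ) : Prop := ∀ F : Set ℝ, IsClosed F → 0 < volume F → (D ∩ F).Nonempty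

/-- A Bernstein-type family: continuum many pairwise disjoint sets, each meeting every
closed set of positive measure. -/
lemma exists_bernstein_family :
    ∃ D : (Icc (0:ℝ) 1) → Set ℝ,
      (Pairwise fun s t => Disjoint (D s) (D t)) ∧ ∀ t, MeetsPos (D t) := by
  classical
  set ι : Type := Set (ℚ × ℚ) × (Icc (0:ℝ) 1) with hιdef
  have hι : #ι ≤ 𝔠 := by
    rw [hιdef, mk_prod]
    simp only [Cardinal.lift_id]
    calc #(Set (ℚ × ℚ)) * #(Icc (0:ℝ) 1) ≤ 𝔠 * 𝔠 := by
          apply mul_le_mul'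
          · rw [mk_set, mk_denumerable, two_power_aleph0]
          · exact (mk_subtype_le _).trans_eq mk_real
      _ = 𝔠 := mul_eq_self aleph0_le_continuum
  let G : ι → Set ℝ := fun p => if 0 < volume (codeSet p.1) then codeSet p.1 else univ
  have hG : ∀ p, #ι ≤ #(G p) := by
    intro p
    refine hι.trans ?_
    by_cases h : 0 < volume (codeSet p.1)
    · simpa [G, h] using continuum_le_mk_of_pos (isClosed_codeSet p.1) h
    · simp [G, h, mk_univ, mk_real]
  obtain ⟨f, finj, fmem⟩ := exists_injective_selection G hG
  refine ⟨fun t => range fun c => f (c, t), ?_, ?_⟩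
  · intro s t hst
    rw [Set.disjoint_left]
    rintro x ⟨c, rfl⟩ ⟨c', hc'⟩
    have := finj hc'
    exact hst (congrArg Prod.snd this).symm
  · intro t F hcl hpos
    obtain ⟨c, rfl⟩ := exists_codeSet hcl
    refine ⟨f (c, t), mem_range_self c, ?_⟩
    have := fmem (c, t)
    simpa [G, hpos] using this

lemma null_of_disjoint {D B : Set ℝ} (hD : MeetsPos D) (hB : MeasurableSet B)
    (hfin : volume B ≠ ⊤) (hdisj : Disjoint D B) : volume B = 0 := by
  by_contra h
  obtain ⟨K, hKB, hK, hlt⟩ := hB.exists_isCompact_lt_add (μ := volume) hfin h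
  have hKpos : 0 < volume K := by
    by_contra hK0
    push_neg at hK0
    have : volume K = 0 := le_antisymm hK0 (zero_le ..)
    rw [this, zero_add] at hlt
    exact absurd hlt (lt_irrefl _)
  obtain ⟨x, hxD, hxK⟩ := hD K hK.isClosed hKpos
  exact hdisj.ne_of_mem hxD (hKB hxK) rfl

lemma outer_trace {D M : Set ℝ} (hD : MeetsPos D) (hM : MeasurableSet M)
    (hfin : volume M ≠ ⊤) : volume (D ∩ M) = volume M := by
  refine le_antisymm (measure_mono inter_subset_right) ?_
  rw [measure_eq_iInf (D ∩ M)]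
  refine le_iInf fun C => le_iInf fun hsub => le_iInf fun hC => ?_
  have h0 : volume (M \ C) = 0 := by
    refine null_of_disjoint hD (hM.diff hC) ?_ ?_
    · exact fun ht => hfin (top_le_iff.1 (ht ▸ measure_mono diff_subset))
    · rw [Set.disjoint_right]
      rintro x ⟨hxM, hxC⟩ hxD
      exact hxC (hsub ⟨hxD, hxM⟩)
  calc volume M = volume (M ∩ C) + volume (M \ C) := (measure_inter_add_diff M hC).symm
    _ = volume (M ∩ C) := by rw [h0, add_zero]
    _ ≤ volume C := measure_mono inter_subset_right

section Family
variable {D : Icc (0:ℝ) 1 → Set ℝ}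

/-- The range of the `α`-th random variable. -/
def SS (D : Icc (0:ℝ) 1 → Set ℝ) (α : Icc (0:ℝ) 1) : Set ℝ :=
  Icc 0 (α : ℝ) ∪ (D α ∩ Ioc (α : ℝ) 1)

lemma SS_subset (α : Icc (0:ℝ) 1) : SS D α ⊆ Icc 0 1 := by
  rintro x (⟨h0, h1⟩ | ⟨-, h1, h2⟩)
  · exact ⟨h0, h1.trans α.2.2⟩
  · exact ⟨(α.2.1.trans_lt h1).le, h2⟩

lemma Icc_subset_SS (α : Icc (0:ℝ) 1) : Icc 0 (α:ℝ) ⊆ SS D α := subset_union_left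

/-- Trace property: `SS D α` has full outer measure in every measurable subset of `[0,1]`. -/
lemma SS_trace (hmeets : ∀ t, MeetsPos (D t)) (α : Icc (0:ℝ) 1) {B : Set ℝ}
    (hB : MeasurableSet B) :
    volume (B ∩ SS D α) = volume (B ∩ Icc 0 1) := by
  refine le_antisymm (measure_mono (inter_subset_inter_right _ (SS_subset α))) ?_
  rw [measure_eq_iInf (B ∩ SS D α)]
  refine le_iInf fun C => le_iInf fun hsub => le_iInf fun hC => ?_
  set N : Set ℝ := (B ∩ Icc 0 1) \ C with hN
  have hNmeas : MeasurableSet N := (hB.inter measurableSet_Icc).diff hC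
  have hN1 : N ∩ Icc 0 (α:ℝ) = ∅ := by
    rw [eq_empty_iff_forall_notMem]
    rintro x ⟨⟨⟨hxB, -⟩, hxC⟩, hxI⟩
    exact hxC (hsub ⟨hxB, Icc_subset_SS α hxI⟩)
  have hN2 : volume (N ∩ Ioc (α:ℝ) 1) = 0 := by
    refine null_of_disjoint (hmeets α) (hNmeas.inter measurableSet_Ioc) ?_ ?_
    · refine ne_of_lt (lt_of_le_of_lt
        (measure_mono (inter_subset_right : N ∩ Ioc (α:ℝ) 1 ⊆ Ioc (α:ℝ) 1)) ?_)
      rw [Real.volume_Ioc]; exact ENNReal.ofReal_lt_top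
    · rw [Set.disjoint_right]
      rintro x ⟨⟨⟨hxB, -⟩, hxC⟩, hxI⟩ hxD
      exact hxC (hsub ⟨hxB, Or.inr ⟨hxD, hxI⟩⟩)
  have hNnull : volume N = 0 := by
    have hcover : N ⊆ (N ∩ Icc 0 (α:ℝ)) ∪ (N ∩ Ioc (α:ℝ) 1) := by
      rintro x hx
      rcases le_or_gt x (α:ℝ) with h | h
      · exact Or.inl ⟨hx, hx.1.2.1, h⟩
      · exact Or.inr ⟨hx, h, hx.1.2.2⟩
    refine le_antisymm ?_ (zero_le ..)
    calc volume N ≤ volume ((N ∩ Icc 0 (α:ℝ)) ∪ (N ∩ Ioc (α:ℝ) 1)) := measure_mono hcover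
      _ ≤ volume (N ∩ Icc 0 (α:ℝ)) + volume (N ∩ Ioc (α:ℝ) 1) := measure_union_le _ _
      _ = 0 := by rw [hN1, hN2, measure_empty, zero_add]
  calc volume (B ∩ Icc 0 1) = volume ((B ∩ Icc 0 1) ∩ C) + volume N :=
        (measure_inter_add_diff _ hC).symm
    _ = volume ((B ∩ Icc 0 1) ∩ C) := by rw [hNnull, add_zero]
    _ ≤ volume C := measure_mono inter_subset_right

/-- The trace measure on the subtype `SS D α`. -/
noncomputable def PP (hmeets : ∀ t, MeetsPos (D t)) (α : Icc (0:ℝ) 1) : Measure (SS D α) :=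
  Measure.ofMeasurable (fun s _ => volume (Subtype.val '' s))
    (by simp)
    (by
      intro f hmeas hpair
      have hex : ∀ i, ∃ B : Set ℝ, MeasurableSet B ∧ Subtype.val ⁻¹' B = f i := fun i =>
        MeasurableSpace.measurableSet_comap.1 (hmeas i)
      choose B hBmeas hBpre using hex
      have himg : ∀ i, Subtype.val '' (f i) = SS D α ∩ B i := by
        intro i; rw [← hBpre i, Subtype.image_preimage_val]
      have hval : ∀ i, volume (Subtype.val '' (f i)) = volume (B i ∩ Icc 0 1) := by
        intro i; rw [himg i, inter_comm, SS_trace hmeets α (hBmeas i)]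
      have hUn : Subtype.val '' (⋃ i, f i) = SS D α ∩ ⋃ i, B i := by
        rw [image_iUnion]
        rw [inter_iUnion]
        exact iUnion_congr himg
      have hBnull : ∀ i j, i ≠ j → volume ((B i ∩ Icc 0 1) ∩ (B j ∩ Icc 0 1)) = 0 := by
        intro i j hij
        have hdisjS : SS D α ∩ (B i ∩ B j) = ∅ := by
          have := hpair hij
          rw [Function.onFun, Set.disjoint_iff_inter_eq_empty] at this
          rw [← hBpre i, ← hBpre j, ← preimage_inter] at this
          rw [eq_empty_iff_forall_notMem]
          rintro x ⟨hxS, hxB⟩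
          rw [eq_empty_iff_forall_notMem] at this
          exact this ⟨x, hxS⟩ hxB
        have h1 : volume ((B i ∩ B j) ∩ SS D α) = volume ((B i ∩ B j) ∩ Icc 0 1) :=
          SS_trace hmeets α ((hBmeas i).inter (hBmeas j))
        rw [inter_comm, hdisjS, measure_empty] at h1
        have : (B i ∩ Icc 0 1) ∩ (B j ∩ Icc 0 1) ⊆ (B i ∩ B j) ∩ Icc 0 1 := by
          rintro x ⟨⟨h1', h2'⟩, ⟨h3', -⟩⟩; exact ⟨⟨h1', h3'⟩, h2'⟩
        exact le_antisymm ((measure_mono this).trans_eq h1.symm) (zero_le ..)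
      calc volume (Subtype.val '' ⋃ i, f i) = volume ((⋃ i, B i) ∩ Icc 0 1) := by
            rw [hUn, inter_comm, SS_trace hmeets α (MeasurableSet.iUnion hBmeas)]
        _ = volume (⋃ i, B i ∩ Icc 0 1) := by rw [iUnion_inter]
        _ = ∑' i, volume (B i ∩ Icc 0 1) := by
            refine measure_iUnion₀ ?_
              (fun i => ((hBmeas i).inter measurableSet_Icc).nullMeasurableSet)
            intro i j hij
            exact hBnull i j hij
        _ = ∑' i, volume (Subtype.val '' f i) := tsum_congr fun i => (hval i).symm)

lemma PP_apply (hmeets : ∀ t, MeetsPos (D t)) (α : Icc (0:ℝ) 1) {s : Set (SS D α)}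
    (hs : MeasurableSet s) :
    PP hmeets α s = volume (Subtype.val '' s) :=
  Measure.ofMeasurable_apply s hs

lemma PP_map (hmeets : ∀ t, MeetsPos (D t)) (α : Icc (0:ℝ) 1) :
    (PP hmeets α).map (Subtype.val) = volume.restrict (Icc (0:ℝ) 1) := by
  refine Measure.ext fun B hB => ?_
  rw [Measure.map_apply measurable_subtype_coe hB, Measure.restrict_apply hB,
    PP_apply hmeets α (measurable_subtype_coe hB), Subtype.image_preimage_val,
    inter_comm, SS_trace hmeets α hB]

lemma PP_prob (hmeets : ∀ t, MeetsPos (D t)) (α : Icc (0:ℝ) 1) :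
    IsProbabilityMeasure (PP hmeets α) := by
  constructor
  rw [PP_apply hmeets α MeasurableSet.univ, image_univ, Subtype.range_coe]
  have : volume (univ ∩ SS D α) = volume (univ ∩ Icc (0:ℝ) 1) :=
    SS_trace hmeets α MeasurableSet.univ
  rw [univ_inter, univ_inter] at this
  rw [this, Real.volume_Icc]
  norm_num

lemma SS_inter (hdisj : Pairwise fun s t => Disjoint (D s) (D t))
    {α β : Icc (0:ℝ) 1} (hab : (α:ℝ) < (β:ℝ)) :
    SS D α ∩ SS D β = Icc 0 (α:ℝ) ∪ (D α ∩ Ioc (α:ℝ) (β:ℝ)) := by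
  have hne : α ≠ β := fun h => absurd (h ▸ hab) (lt_irrefl _)
  apply le_antisymm
  · rintro x ⟨h1 | ⟨hD1, hI1⟩, h2 | ⟨hD2, hI2⟩⟩
    · exact Or.inl h1
    · exact Or.inl h1
    · exact Or.inr ⟨hD1, hI1.1, h2.2⟩
    · exact absurd rfl ((hdisj hne).ne_of_mem hD1 hD2)
  · rintro x (h | ⟨hD1, hI1⟩)
    · exact ⟨Or.inl h, Or.inl ⟨h.1, h.2.trans hab.le⟩⟩
    · refine ⟨Or.inr ⟨hD1, hI1.1, hI1.2.trans β.2.2⟩,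
        Or.inl ⟨(α.2.1.trans_lt hI1.1).le, hI1.2⟩⟩

lemma SS_inter_outer (hdisj : Pairwise fun s t => Disjoint (D s) (D t))
    (hmeets : ∀ t, MeetsPos (D t))
    {α β : Icc (0:ℝ) 1} (hab : (α:ℝ) < (β:ℝ)) :
    volume (SS D α ∩ SS D β) = ENNReal.ofReal (β:ℝ) := by
  rw [SS_inter hdisj hab]
  set E : Set ℝ := Icc 0 (α:ℝ) ∪ (D α ∩ Ioc (α:ℝ) (β:ℝ)) with hE
  have h1 : E ∩ Icc 0 (α:ℝ) = Icc 0 (α:ℝ) := inter_eq_right.2 subset_union_left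
  have h2 : E \ Icc 0 (α:ℝ) = D α ∩ Ioc (α:ℝ) (β:ℝ) := by
    ext x
    constructor
    · rintro ⟨h | h, hnot⟩
      · exact absurd h hnot
      · exact h
    · rintro ⟨hD1, hI1⟩
      exact ⟨Or.inr ⟨hD1, hI1⟩, fun hc => absurd hc.2 (not_le.2 hI1.1)⟩
  have h3 : volume (D α ∩ Ioc (α:ℝ) (β:ℝ)) = ENNReal.ofReal ((β:ℝ) - (α:ℝ)) := by
    rw [outer_trace (hmeets α) measurableSet_Ioc, Real.volume_Ioc]
    rw [Real.volume_Ioc]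
    exact ENNReal.ofReal_ne_top
  calc volume E = volume (E ∩ Icc 0 (α:ℝ)) + volume (E \ Icc 0 (α:ℝ)) :=
        (measure_inter_add_diff E measurableSet_Icc).symm
    _ = ENNReal.ofReal ((α:ℝ) - 0) + ENNReal.ofReal ((β:ℝ) - (α:ℝ)) := by
        rw [h1, h2, h3, Real.volume_Icc]
    _ = ENNReal.ofReal (β:ℝ) := by
        rw [sub_zero, ← ENNReal.ofReal_add α.2.1 (by linarith)]
        ring_nf

lemma SS_inter_inner (hdisj : Pairwise fun s t => Disjoint (D s) (D t))
    (hmeets : ∀ t, MeetsPos (D t))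
    {α β : Icc (0:ℝ) 1} (hab : (α:ℝ) < (β:ℝ)) :
    lebesgueInner (SS D α ∩ SS D β) = ENNReal.ofReal (α:ℝ) := by
  have hne : α ≠ β := fun h => absurd (h ▸ hab) (lt_irrefl _)
  rw [SS_inter hdisj hab]
  set E : Set ℝ := Icc 0 (α:ℝ) ∪ (D α ∩ Ioc (α:ℝ) (β:ℝ)) with hE
  apply le_antisymm
  · refine iSup_le fun T => iSup_le fun hT => iSup_le fun hsub => ?_
    have hdiff : T \ Icc 0 (α:ℝ) ⊆ D α ∩ Ioc (α:ℝ) (β:ℝ) := by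
      rintro x ⟨hxT, hnot⟩
      rcases hsub hxT with h | h
      · exact absurd h hnot
      · exact h
    have h0 : volume (T \ Icc 0 (α:ℝ)) = 0 := by
      refine null_of_disjoint (hmeets β) (hT.diff measurableSet_Icc) ?_ ?_
      · refine ne_of_lt (lt_of_le_of_lt (measure_mono
          (fun x hx => (hdiff hx).2 : T \ Icc 0 (α:ℝ) ⊆ Ioc (α:ℝ) (β:ℝ))) ?_)
        rw [Real.volume_Ioc]; exact ENNReal.ofReal_lt_top
      · rw [Set.disjoint_right]
        intro x hx hxD
        exact (hdisj hne).ne_of_mem (hdiff hx).1 hxD rfl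
    calc volume T = volume (T ∩ Icc 0 (α:ℝ)) + volume (T \ Icc 0 (α:ℝ)) :=
          (measure_inter_add_diff T measurableSet_Icc).symm
      _ = volume (T ∩ Icc 0 (α:ℝ)) := by rw [h0, add_zero]
      _ ≤ volume (Icc 0 (α:ℝ)) := measure_mono inter_subset_right
      _ = ENNReal.ofReal (α:ℝ) := by rw [Real.volume_Icc, sub_zero]
  · have : volume (Icc 0 (α:ℝ)) = ENNReal.ofReal (α:ℝ) := by
      rw [Real.volume_Icc, sub_zero]
    rw [← this]
    exact le_iSup_of_le (Icc 0 (α:ℝ)) (le_iSup_of_le measurableSet_Icc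
      (le_iSup_of_le subset_union_left le_rfl))

end Family

end Stmt4Aux

open Stmt4Aux

/-- There is a family `X α`, `α ∈ [0,1]`, of uniformly distributed random
variables such that for `α ≠ β` the intersection of the ranges of `X α` and `X β` has
Lebesgue inner measure `min α β` and Lebesgue outer measure `max α β`.
(The outer measure of an arbitrary set is its `volume` in Mathlib.) -/
theorem stmt_4 :
    ∃ (Ω : Set.Icc (0 : ℝ) 1 → Type) (_ : ∀ α, MeasurableSpace (Ω α))
      (P : ∀ α, Measure (Ω α)) (X : ∀ α, Ω α → ℝ),
      (∀ α, IsProbabilityMeasure (P α)) ∧ (∀ α, IsUniformOn01 (P α) (X α)) ∧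
      ∀ α β : Set.Icc (0 : ℝ) 1, α ≠ β →
        lebesgueInner (Set.range (X α) ∩ Set.range (X β))
            = ENNReal.ofReal (min (α : ℝ) (β : ℝ)) ∧
        volume (Set.range (X α) ∩ Set.range (X β))
            = ENNReal.ofReal (max (α : ℝ) (β : ℝ)) := by
  obtain ⟨D, hdisj, hmeets⟩ := exists_bernstein_family
  refine ⟨fun α => ↥(SS D α), fun α => inferInstance, fun α => PP hmeets α,
    fun α => Subtype.val, fun α => PP_prob hmeets α, ?_, ?_⟩
  · intro α
    exact ⟨measurable_subtype_coe, by rw [Subtype.range_coe]; exact SS_subset α,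
      PP_map hmeets α⟩
  · intro α β hne
    have hrange : ∀ γ : Icc (0:ℝ) 1, Set.range (Subtype.val : SS D γ → ℝ) = SS D γ :=
      fun γ => Subtype.range_coe
    rw [hrange α, hrange β]
    rcases lt_trichotomy (α:ℝ) (β:ℝ) with h | h | h
    · rw [min_eq_left h.le, max_eq_right h.le]
      exact ⟨SS_inter_inner hdisj hmeets h, SS_inter_outer hdisj hmeets h⟩
    · exact absurd (Subtype.ext h) hne
    · rw [min_eq_right h.le, max_eq_left h.le, inter_comm]
      exact ⟨SS_inter_inner hdisj hmeets h, SS_inter_outer hdisj hmeets h⟩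
end

section
/- A subset A of [0,1] is the range of some uniformly distributed random variable (i.e., there exist a probability space (Ω, F, P) and a uniformly distributed X : Ω → [0,1] with X(Ω) = A) if and only if A has Lebesgue outer measure 1. -/
open MeasureTheory Set

/-- Key lemma: if `A ⊆ [0,1]` has full outer measure, then for every measurable `B`,
`λ*(A ∩ B) = λ(B ∩ [0,1])`. -/
lemma key_outer (A : Set ℝ) (hA : A ⊆ Set.Icc 0 1) (hA1 : volume A = 1)
    {B : Set ℝ} (hB : MeasurableSet B) :
    volume (A ∩ B) = volume (B ∩ Set.Icc (0:ℝ) 1) := by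
  have hIcc : volume (Set.Icc (0:ℝ) 1) = 1 := by simp
  have h1 : volume (A ∩ B) + volume (A \ B) = 1 := by
    rw [measure_inter_add_diff A hB, hA1]
  have h2 : volume (Set.Icc (0:ℝ) 1 ∩ B) + volume (Set.Icc (0:ℝ) 1 \ B) = 1 := by
    rw [measure_inter_add_diff _ hB, hIcc]
  have hle1 : volume (A ∩ B) ≤ volume (Set.Icc (0:ℝ) 1 ∩ B) :=
    measure_mono (inter_subset_inter_left _ hA)
  have hle2 : volume (A \ B) ≤ volume (Set.Icc (0:ℝ) 1 \ B) :=
    measure_mono (diff_subset_diff_left hA)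
  have hfin : volume (Set.Icc (0:ℝ) 1 \ B) ≠ ⊤ := by
    intro h
    rw [h] at h2
    simp at h2
  have hge : volume (Set.Icc (0:ℝ) 1 ∩ B) ≤ volume (A ∩ B) := by
    have : volume (Set.Icc (0:ℝ) 1 ∩ B) + volume (Set.Icc (0:ℝ) 1 \ B)
        ≤ volume (A ∩ B) + volume (Set.Icc (0:ℝ) 1 \ B) := by
      rw [h2, ← h1]
      exact add_le_add le_rfl hle2
    exact (ENNReal.add_le_add_iff_right hfin).mp this
  rw [inter_comm B]
  exact le_antisymm hle1 hge

/-- A subset `A` of `[0,1]` is the range of some uniformly distributed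
random variable if and only if `A` has Lebesgue outer measure `1`.
(The outer measure of an arbitrary set is its `volume` in Mathlib.) -/
theorem stmt_5 (A : Set ℝ) (hA : A ⊆ Set.Icc 0 1) :
    (∃ (Ω : Type) (_ : MeasurableSpace Ω) (P : Measure Ω),
        IsProbabilityMeasure P ∧ ∃ X : Ω → ℝ, IsUniformOn01 P X ∧ Set.range X = A)
      ↔ volume A = 1 := by
  constructor
  · rintro ⟨Ω, mΩ, P, hP, X, ⟨hXm, hXr, hXmap⟩, hrange⟩
    have hle : volume A ≤ 1 := by
      calc volume A ≤ volume (Set.Icc (0:ℝ) 1) := measure_mono hA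
        _ = 1 := by simp
    refine le_antisymm hle ?_
    set T := toMeasurable volume A with hT
    have hTm : MeasurableSet T := measurableSet_toMeasurable _ _
    have hAT : A ⊆ T := subset_toMeasurable _ _
    have hXT : X ⁻¹' T = Set.univ := by
      rw [Set.eq_univ_iff_forall]
      intro ω
      exact hAT (hrange ▸ Set.mem_range_self ω)
    have h1 : (volume.restrict (Set.Icc (0:ℝ) 1)) T = 1 := by
      rw [← hXmap, Measure.map_apply hXm hTm, hXT, measure_univ]
    calc (1 : ENNReal) = volume (T ∩ Set.Icc (0:ℝ) 1) := by
          rw [← h1, Measure.restrict_apply hTm]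
      _ ≤ volume T := measure_mono inter_subset_left
      _ = volume A := by rw [hT, measure_toMeasurable]
  · intro hA1
    classical
    -- A is nonempty
    have hAne : A.Nonempty := by
      rcases Set.eq_empty_or_nonempty A with h | h
      · rw [h] at hA1; simp at hA1
      · exact h
    obtain ⟨a₀, ha₀⟩ := hAne
    -- outer measure: t ↦ λ*(t ∩ A)
    set ν : OuterMeasure ℝ := OuterMeasure.restrict A volume.toOuterMeasure with hν
    have hνapp : ∀ t, ν t = volume (t ∩ A) := by
      intro t
      rw [hν, OuterMeasure.restrict_apply]
      rfl
    -- the sigma-algebra generated by Borel sets and A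
    set m : MeasurableSpace ℝ :=
      Real.measurableSpace ⊔ MeasurableSpace.generateFrom {A} with hm
    have hle1 : Real.measurableSpace ≤ m := le_sup_left
    have hle2 : MeasurableSpace.generateFrom {A} ≤ m := le_sup_right
    have hmA : MeasurableSet[m] A :=
      hle2 _ (MeasurableSpace.measurableSet_generateFrom rfl)
    have hmB : ∀ {B : Set ℝ}, MeasurableSet[Real.measurableSpace] B → MeasurableSet[m] B :=
      fun hB => hle1 _ hB
    -- every m-measurable set is ν-Caratheodory
    have hcar : m ≤ ν.caratheodory := by
      rw [hm]
      refine sup_le ?_ ?_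
      · intro B hB
        rw [OuterMeasure.isCaratheodory_iff]
        intro t
        simp only [hνapp]
        rw [← measure_inter_add_diff (t ∩ A) hB]
        congr 1
        · rw [Set.inter_right_comm]
        · congr 1
          ext x
          simp only [Set.mem_diff, Set.mem_inter_iff]
          tauto
      · refine MeasurableSpace.generateFrom_le ?_
        rintro s rfl
        rw [OuterMeasure.isCaratheodory_iff]
        intro t
        simp only [hνapp]
        have h1 : (t ∩ s) ∩ s = t ∩ s := by rw [Set.inter_assoc, Set.inter_self]
        have h2 : (t \ s) ∩ s = ∅ := by
          ext x; simp only [Set.mem_inter_iff, Set.mem_diff, Set.mem_empty_iff_false]; tauto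
        rw [h1, h2]
        simp
    set P : @Measure ℝ m := @OuterMeasure.toMeasure ℝ m ν hcar with hP
    have hPapp : ∀ {s : Set ℝ}, MeasurableSet[m] s → P s = volume (s ∩ A) := by
      intro s hs
      rw [hP, @toMeasure_apply ℝ m ν hcar s hs, hνapp]
    -- the random variable
    set X : ℝ → ℝ := fun ω => if ω ∈ A then ω else a₀ with hX
    have hXval : ∀ ω, (ω ∈ A → X ω = ω) ∧ (ω ∉ A → X ω = a₀) := by
      intro ω
      constructor
      · intro h; rw [hX]; simp only [if_pos h]
      · intro h; rw [hX]; simp only [if_neg h]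
    have hXrange : Set.range X = A := by
      ext x
      constructor
      · rintro ⟨ω, rfl⟩
        by_cases h : ω ∈ A
        · rw [(hXval ω).1 h]; exact h
        · rw [(hXval ω).2 h]; exact ha₀
      · intro hx
        exact ⟨x, (hXval x).1 hx⟩
    have hXpre : ∀ B : Set ℝ, X ⁻¹' B ∩ A = A ∩ B := by
      intro B
      ext x
      simp only [Set.mem_inter_iff, Set.mem_preimage]
      constructor
      · rintro ⟨hxB, hxA⟩
        rw [(hXval x).1 hxA] at hxB
        exact ⟨hxA, hxB⟩
      · rintro ⟨hxA, hxB⟩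
        exact ⟨by rwa [(hXval x).1 hxA], hxA⟩
    have hXmble : @Measurable ℝ ℝ m Real.measurableSpace X := by
      intro B hB
      by_cases h : a₀ ∈ B
      · have : X ⁻¹' B = (A ∩ B) ∪ Aᶜ := by
          ext x
          simp only [Set.mem_preimage, Set.mem_union, Set.mem_inter_iff, Set.mem_compl_iff]
          by_cases hx : x ∈ A
          · rw [(hXval x).1 hx]; tauto
          · rw [(hXval x).2 hx]; tauto
        rw [this]
        exact (hmA.inter (hmB hB)).union hmA.compl
      · have : X ⁻¹' B = A ∩ B := by
          ext x
          simp only [Set.mem_preimage, Set.mem_inter_iff]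
          by_cases hx : x ∈ A
          · rw [(hXval x).1 hx]; tauto
          · rw [(hXval x).2 hx]; tauto
        rw [this]
        exact hmA.inter (hmB hB)
    have hprob : @IsProbabilityMeasure ℝ m P := by
      refine @IsProbabilityMeasure.mk ℝ m P ?_
      rw [hPapp (@MeasurableSet.univ ℝ m), Set.univ_inter, hA1]
    refine ⟨ℝ, m, P, hprob, X, ⟨hXmble, ?_, ?_⟩, hXrange⟩
    · rw [hXrange]; exact hA
    · refine @Measure.ext ℝ Real.measurableSpace _ _ fun B hB => ?_
      rw [@Measure.map_apply ℝ ℝ m Real.measurableSpace P X hXmble B hB,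
        hPapp (hXmble hB), hXpre B, key_outer A hA hA1 hB, Measure.restrict_apply hB]
end

section
/- There exists a partition of [0,1] into continuum many pairwise disjoint nonempty sets, each of which has Lebesgue outer measure 1. That is, there exists a family (A_α)_{α ∈ I} of pairwise disjoint subsets of [0,1] indexed by a set I of cardinality of the continuum, whose union is [0,1], with λ*(A_α) = 1 for every α. -/
open MeasureTheory Set

namespace Stmt9Aux

noncomputable section

open Cardinal Metric ENNReal

/-- The index type: a well-ordered type of cardinality continuum. -/
abbrev I : Type := Cardinal.continuum.{0}.ord.ToType

instance : Nonempty I :=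
  Ordinal.toType_nonempty_iff_ne_zero.2 (by
    simp [Cardinal.ord_eq_zero, Cardinal.continuum_ne_zero])

lemma mk_I : #I = Cardinal.continuum := by
  simp

/-- Closed positive-measure subsets of `Icc 0 1`. -/
def CS : Type := {K : Set ℝ // IsClosed K ∧ K ⊆ Icc (0:ℝ) 1 ∧ 0 < volume K}

lemma CS_nonempty_set (K : CS) : K.1.Nonempty := by
  rcases Set.eq_empty_or_nonempty K.1 with he | h'
  · exact absurd K.2.2.2 (by simp [he])
  · exact h'

instance : Nonempty CS :=
  ⟨⟨Icc 0 1, isClosed_Icc, subset_rfl, by simp [Real.volume_Icc]⟩⟩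

lemma mk_CS_le : #CS ≤ Cardinal.continuum := by
  have hinj : Function.Injective (fun K : CS => fun q : ℚ => infDist (q : ℝ) K.1) := by
    intro K L h
    have hfun : (fun x : ℝ => infDist x K.1) = fun x : ℝ => infDist x L.1 := by
      apply Continuous.ext_on (Rat.denseRange_cast (𝕜 := ℝ))
        (continuous_infDist_pt _) (continuous_infDist_pt _)
      rintro x ⟨q, rfl⟩
      exact congrFun h q
    have hset : K.1 = L.1 := by
      ext x
      rw [K.2.1.mem_iff_infDist_zero (CS_nonempty_set K),
        L.2.1.mem_iff_infDist_zero (CS_nonempty_set L), ← congrFun hfun x]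
    exact Subtype.ext hset
  have h1 : #CS ≤ #(ℚ → ℝ) := Cardinal.mk_le_of_injective hinj
  have h2 : #(ℚ → ℝ) = Cardinal.continuum := by
    rw [Cardinal.mk_arrow]
    simp [Cardinal.mk_real, Cardinal.continuum_power_aleph0]
  rwa [h2] at h1

lemma continuum_le_mk_K (K : CS) : Cardinal.continuum ≤ #K.1 := by
  have hcnt : ¬ K.1.Countable := by
    intro hc
    exact absurd (hc.measure_zero volume) (by simpa using K.2.2.2.ne')
  obtain ⟨f, hrange, -, hinj⟩ := K.2.1.exists_nat_bool_injection_of_not_countable hcnt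
  have : Function.Injective (fun x : ℕ → Bool => (⟨f x, hrange ⟨x, rfl⟩⟩ : K.1)) := by
    intro a b hab
    exact hinj (congrArg Subtype.val hab)
  have h1 : #(ℕ → Bool) ≤ #K.1 := Cardinal.mk_le_of_injective this
  have h2 : #(ℕ → Bool) = Cardinal.continuum := by
    rw [Cardinal.mk_arrow]; simp [Cardinal.two_power_aleph0]
  rwa [h2] at h1

/-- An enumeration of all (label, closed set) pairs by `I`. -/
def e : I ≃ I × CS := by
  have h : #(I × CS) = #I := by
    rw [Cardinal.mk_prod, Cardinal.lift_id, Cardinal.lift_id, mk_I,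
      Cardinal.mul_eq_left Cardinal.aleph0_le_continuum mk_CS_le (Cardinal.mk_ne_zero CS)]
  exact (Cardinal.eq.mp h.symm).some

def lab (ξ : I) : I := (e ξ).1

def KS (ξ : I) : Set ℝ := ((e ξ).2 : CS).1

lemma KS_subset (ξ : I) : KS ξ ⊆ Icc 0 1 := (e ξ).2.2.2.1

lemma continuum_le_mk_KS (ξ : I) : Cardinal.continuum ≤ #(KS ξ) :=
  continuum_le_mk_K (e ξ).2

lemma avoid {ξ : I} (g : ∀ η : I, η < ξ → ℝ) :
    (KS ξ \ Set.range (fun p : {η : I // η < ξ} => g p.1 p.2)).Nonempty := by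
  by_contra h
  rw [Set.not_nonempty_iff_eq_empty, Set.diff_eq_empty] at h
  have h1 : #(KS ξ) ≤ #{η : I // η < ξ} :=
    (Cardinal.mk_le_mk_of_subset h).trans (Cardinal.mk_range_le)
  have h2 : #{η : I // η < ξ} < Cardinal.continuum := Cardinal.mk_Iio_ord_toType ξ
  exact absurd ((continuum_le_mk_KS ξ).trans h1) (not_le.mpr h2)

/-- The transfinite choice function. -/
def pick : I → ℝ :=
  IsWellFounded.fix (α := I) (· < ·) (fun _ g => (avoid g).some)

lemma pick_eq (ξ : I) :
    pick ξ = (avoid (fun η (_ : η < ξ) => pick η)).some :=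
  IsWellFounded.fix_eq (α := I) (· < ·) (fun _ g => (avoid g).some) ξ

lemma pick_spec (ξ : I) :
    pick ξ ∈ KS ξ \ Set.range (fun p : {η : I // η < ξ} => pick p.1) := by
  rw [pick_eq ξ]
  exact Set.Nonempty.some_mem _

lemma pick_mem (ξ : I) : pick ξ ∈ KS ξ := (pick_spec ξ).1

lemma pick_inj : Function.Injective pick := by
  intro a b h
  by_contra hne
  rcases lt_or_gt_of_ne hne with hl | hl
  · exact (pick_spec b).2 ⟨⟨a, hl⟩, h⟩
  · exact (pick_spec a).2 ⟨⟨b, hl⟩, h.symm⟩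

def a0 : I := Classical.arbitrary I

/-- The partition. -/
def A (α : I) : Set ℝ :=
  pick '' {ξ | lab ξ = α} ∪ (if α = a0 then Icc 0 1 \ Set.range pick else ∅)

lemma A_subset (α : I) : A α ⊆ Icc 0 1 := by
  apply Set.union_subset
  · rintro x ⟨ξ, -, rfl⟩
    exact KS_subset ξ (pick_mem ξ)
  · split_ifs
    · exact Set.diff_subset
    · exact Set.empty_subset _

lemma mem_A_lab (ξ : I) : pick ξ ∈ A (lab ξ) := Or.inl ⟨ξ, rfl, rfl⟩

lemma exists_idx (α : I) (K : CS) : ∃ ξ : I, lab ξ = α ∧ KS ξ = K.1 := by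
  refine ⟨e.symm (α, K), ?_, ?_⟩ <;> simp [lab, KS]

lemma A_nonempty (α : I) : (A α).Nonempty := by
  obtain ⟨ξ, hlab, -⟩ :=
    exists_idx α ⟨Icc 0 1, isClosed_Icc, subset_rfl, by simp [Real.volume_Icc]⟩
  exact ⟨pick ξ, hlab ▸ mem_A_lab ξ⟩

lemma A_mem_image {α : I} {x : ℝ} (h : x ∈ pick '' {ξ | lab ξ = α}) :
    x ∈ Set.range pick := by
  rcases h with ⟨ξ, -, rfl⟩; exact ⟨ξ, rfl⟩

lemma mem_extra {α : I} {x : ℝ} (h : x ∈ (if α = a0 then Icc (0:ℝ) 1 \ Set.range pick else ∅)) :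
    α = a0 ∧ x ∈ Icc (0:ℝ) 1 \ Set.range pick := by
  split_ifs at h with hc
  · exact ⟨hc, h⟩
  · exact absurd h (Set.notMem_empty x)

lemma A_disjoint {α β : I} (hne : α ≠ β) : Disjoint (A α) (A β) := by
  rw [Set.disjoint_left]
  rintro x (hx | hx) (hy | hy)
  · rcases hx with ⟨ξ, hξ, rfl⟩
    rcases hy with ⟨η, hη, hp⟩
    exact hne (hξ ▸ hη ▸ congrArg lab (pick_inj hp) ▸ rfl)
  · exact (mem_extra hy).2.2 (A_mem_image hx)
  · exact (mem_extra hx).2.2 (A_mem_image hy)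
  · exact hne ((mem_extra hx).1.trans (mem_extra hy).1.symm)

lemma A_union : (⋃ α, A α) = Set.Icc (0:ℝ) 1 := by
  apply Set.Subset.antisymm
  · exact Set.iUnion_subset A_subset
  · intro x hx
    by_cases hr : x ∈ Set.range pick
    · rcases hr with ⟨ξ, rfl⟩
      exact Set.mem_iUnion.2 ⟨lab ξ, mem_A_lab ξ⟩
    · exact Set.mem_iUnion.2 ⟨a0, Or.inr (by simp [hx, hr])⟩

lemma A_volume (α : I) : volume (A α) = 1 := by
  apply le_antisymm
  · exact (measure_mono (A_subset α)).trans_eq (by simp [Real.volume_Icc])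
  · set T := toMeasurable volume (A α) with hT
    have hTmeas : MeasurableSet T := measurableSet_toMeasurable volume (A α)
    have hsub : A α ⊆ T := subset_toMeasurable volume (A α)
    have hS : volume (Icc (0:ℝ) 1 \ T) = 0 := by
      by_contra h
      have hpos : 0 < volume (Icc (0:ℝ) 1 \ T) := zero_lt_iff.mpr h
      obtain ⟨K, hKS, hKc, hK⟩ := (measurableSet_Icc.diff hTmeas).exists_lt_isCompact hpos
      have hKicc : K ⊆ Icc (0:ℝ) 1 := hKS.trans Set.diff_subset
      obtain ⟨ξ, hlab, hKeq⟩ := exists_idx α ⟨K, hKc.isClosed, hKicc, hK⟩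
      have h1 : pick ξ ∈ K := by have := pick_mem ξ; rwa [hKeq] at this
      have h2 : pick ξ ∈ T := hsub (hlab ▸ mem_A_lab ξ)
      exact (hKS h1).2 h2
    have hcover : Icc (0:ℝ) 1 ⊆ T ∪ (Icc (0:ℝ) 1 \ T) := by
      intro x hx
      by_cases hxT : x ∈ T
      · exact Or.inl hxT
      · exact Or.inr ⟨hx, hxT⟩
    have h1le : (1 : ℝ≥0∞) ≤ volume T := by
      have e1 : (1 : ℝ≥0∞) = volume (Icc (0:ℝ) 1) := by simp [Real.volume_Icc]
      have e2 : volume (Icc (0:ℝ) 1) ≤ volume T + volume (Icc (0:ℝ) 1 \ T) :=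
        (measure_mono hcover).trans (measure_union_le _ _)
      rw [e1]
      rwa [hS, add_zero] at e2
    rwa [hT, measure_toMeasurable] at h1le

end

end Stmt9Aux

/-- There is a partition of `[0,1]` into continuum many pairwise disjoint
nonempty sets, each of Lebesgue outer measure `1`.
(The outer measure of an arbitrary set is its `volume` in Mathlib.) -/
theorem stmt_9 :
    ∃ (I : Type) (A : I → Set ℝ),
      Cardinal.mk I = Cardinal.continuum ∧
      (∀ α, (A α).Nonempty) ∧
      (∀ α β, α ≠ β → Disjoint (A α) (A β)) ∧
      (⋃ α, A α) = Set.Icc 0 1 ∧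
      (∀ α, volume (A α) = 1) := by
  exact ⟨Stmt9Aux.I, Stmt9Aux.A, Stmt9Aux.mk_I, Stmt9Aux.A_nonempty,
    fun α β h => Stmt9Aux.A_disjoint h, Stmt9Aux.A_union, Stmt9Aux.A_volume⟩
end

section
/- There exists a set M ⊆ ℝ such that neither M nor its complement ℝ \ M contains any Lebesgue measurable subset of positive Lebesgue measure (equivalently, both M and ℝ \ M have Lebesgue inner measure zero), and moreover ℝ \ M = M + 1 = {m + 1 : m ∈ M}. -/
open MeasureTheory Set Pointwise

/-- A `ℚ`-linear functional on `ℝ` with `f 1 = 1`. -/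
lemma exists_functional : ∃ f : ℝ →ₗ[ℚ] ℚ, f 1 = 1 := by
  have li : LinearIndepOn ℚ id ({1} : Set ℝ) :=
    (linearIndepOn_singleton_iff ℚ).mpr one_ne_zero
  refine ⟨(Module.Basis.extend li).coord ⟨1, li.subset_extend (subset_univ _) rfl⟩, ?_⟩
  have h1 : (Module.Basis.extend li) ⟨1, li.subset_extend (subset_univ _) rfl⟩ = 1 :=
    Module.Basis.extend_apply_self ..
  have h2 := congrArg (Module.Basis.extend li).repr h1
  rw [Module.Basis.repr_self] at h2
  rw [Module.Basis.coord_apply, ← h2]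
  simp

/-- There exists a nonzero element of the kernel of `f`. -/
lemma exists_ker (f : ℝ →ₗ[ℚ] ℚ) (hf : f 1 = 1) : ∃ k : ℝ, k ≠ 0 ∧ f k = 0 := by
  refine ⟨Real.sqrt 2 - (f (Real.sqrt 2) : ℝ), ?_, ?_⟩
  · intro h
    have : Real.sqrt 2 = (f (Real.sqrt 2) : ℝ) := by linarith [sub_eq_zero.mp h]
    exact irrational_sqrt_two ⟨f (Real.sqrt 2), this.symm⟩
  · have h1 : ((f (Real.sqrt 2) : ℚ) : ℝ) = (f (Real.sqrt 2)) • (1 : ℝ) := by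
      simp [Rat.smul_def]
    rw [map_sub, h1, LinearMap.map_smul, hf]
    simp

/-- For any `ε > 0` there is `t` with `|t| < ε` and `f t = 1`. -/
lemma exists_small (f : ℝ →ₗ[ℚ] ℚ) (hf : f 1 = 1) (ε : ℝ) (hε : 0 < ε) :
    ∃ t : ℝ, |t| < ε ∧ f t = 1 := by
  obtain ⟨k, hk0, hk⟩ := exists_ker f hf
  have hkpos : (0:ℝ) < |k| := abs_pos.mpr hk0
  obtain ⟨q, hq1, hq2⟩ := exists_rat_btwn (show -1/k - ε/|k| < -1/k + ε/|k| by
    have : 0 < ε / |k| := div_pos hε hkpos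
    linarith)
  refine ⟨1 + q • k, ?_, ?_⟩
  · have h1 : |(q:ℝ) - (-1/k)| < ε/|k| := by
      rw [abs_sub_lt_iff]; constructor <;> linarith
    have h2 : |1 + (q:ℝ) * k| = |(q:ℝ) - (-1/k)| * |k| := by
      rw [← abs_mul]
      congr 1
      field_simp
      ring
    rw [Rat.smul_def, h2]
    calc |(q:ℝ) - (-1/k)| * |k| < (ε/|k|) * |k| :=
          mul_lt_mul_of_pos_right h1 hkpos
      _ = ε := by field_simp
  · rw [map_add, LinearMap.map_smul, hk, hf]; simp

/-- Key lemma: any null-measurable subset of a set whose differences avoid `f ⁻¹ 1`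
has measure zero. -/
lemma inner_zero (f : ℝ →ₗ[ℚ] ℚ) (hf : f 1 = 1) (A : Set ℝ)
    (hA : ∀ a ∈ A, ∀ b ∈ A, f (a - b) ≠ 1) :
    ∀ T ⊆ A, NullMeasurableSet T volume → volume T = 0 := by
  intro T hTA hT
  by_contra h
  obtain ⟨s, hsT, hsm, hse⟩ := hT.exists_measurable_subset_ae_eq
  have hs : 0 < volume s := by
    rw [measure_congr hse]
    exact pos_iff_ne_zero.mpr h
  have hSt : s - s ∈ nhds (0 : ℝ) :=
    MeasureTheory.Measure.sub_mem_nhds_zero_of_addHaar_pos volume s hsm hs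
  obtain ⟨ε, hε, hball⟩ := Metric.mem_nhds_iff.mp hSt
  obtain ⟨t, ht, htf⟩ := exists_small f hf ε hε
  have : t ∈ s - s := hball (by simpa [Real.dist_eq] using ht)
  obtain ⟨a, ha, b, hb, rfl⟩ := this
  exact hA a (hTA (hsT ha)) b (hTA (hsT hb)) htf

/-- There is a set `M ⊆ ℝ` such that neither `M` nor `ℝ \ M` contains a
Lebesgue measurable subset of positive measure (i.e. both have inner measure zero), and
moreover `ℝ \ M = M + 1`. Lebesgue measurable sets are the `volume`-null-measurable sets. -/
theorem stmt_11 :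
    ∃ M : Set ℝ,
      (∀ T ⊆ M, NullMeasurableSet T volume → volume T = 0) ∧
      (∀ T ⊆ Mᶜ, NullMeasurableSet T volume → volume T = 0) ∧
      Mᶜ = (fun m : ℝ => m + 1) '' M := by
  obtain ⟨f, hf⟩ := exists_functional
  refine ⟨{x : ℝ | Even ⌊f x⌋}, ?_, ?_, ?_⟩
  · refine inner_zero f hf _ ?_
    intro a ha b hb hab
    rw [map_sub] at hab
    have hfa : f a = f b + 1 := by linarith [sub_eq_iff_eq_add.mp hab]
    have hfl : ⌊f a⌋ = ⌊f b⌋ + 1 := by rw [hfa, Int.floor_add_one]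
    simp only [mem_setOf_eq] at ha hb
    rw [hfl, Int.even_add_one] at ha
    exact ha hb
  · refine inner_zero f hf _ ?_
    intro a ha b hb hab
    rw [map_sub] at hab
    have hfa : f a = f b + 1 := by linarith [sub_eq_iff_eq_add.mp hab]
    have hfl : ⌊f a⌋ = ⌊f b⌋ + 1 := by rw [hfa, Int.floor_add_one]
    simp only [mem_compl_iff, mem_setOf_eq] at ha hb
    rw [hfl, Int.even_add_one, not_not] at ha
    exact hb ha
  · ext x
    simp only [mem_compl_iff, mem_setOf_eq, mem_image]
    constructor
    · intro hx
      refine ⟨x - 1, ?_, by ring⟩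
      have h1 : f (x - 1) = f x - 1 := by rw [map_sub, hf]
      show Even ⌊f (x - 1)⌋
      rw [h1, Int.floor_sub_one]
      rcases Int.even_or_odd ⌊f x⌋ with h | h
      · exact absurd h hx
      · obtain ⟨m, hm⟩ := h
        exact ⟨m, by omega⟩
    · rintro ⟨m, hm, rfl⟩ h
      have h1 : f (m + 1) = f m + 1 := by rw [map_add, hf]
      rw [h1, Int.floor_add_one, Int.even_add_one] at h
      exact h hm
end

section
/- Let ζ be an irrational real number, B_e = {n + mζ : n, m ∈ ℤ, n even}, and B_o = {n + mζ : n, m ∈ ℤ, n odd}. Let C ⊆ ℝ contain exactly one representative of each equivalence class of the relation x ∼ y ⟺ x − y ∈ {n + mζ : n, m ∈ ℤ}, and set M = C + B_e = {c + b : c ∈ C, b ∈ B_e}. Then the difference set D(M) = {m₁ − m₂ : m₁, m₂ ∈ M} is disjoint from B_o, and ℝ \ M = M + 1. -/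
open MeasureTheory Set

lemma uniq_rep (ζ : ℝ) (hζ : Irrational ζ) :
    ∀ n m n' m' : ℤ, (n : ℝ) + m * ζ = n' + m' * ζ → n = n' ∧ m = m' := by
  intro n m n' m' h
  have hm : m = m' := by
    by_contra hne
    apply hζ
    refine ⟨(n - n' : ℚ) / (m' - m : ℚ), ?_⟩
    have h0 : ((m' - m : ℤ) : ℝ) ≠ 0 := by
      exact_mod_cast sub_ne_zero.mpr (Ne.symm hne)
    push_cast at h0 ⊢
    field_simp
    linarith
  subst hm
  refine ⟨?_, rfl⟩
  have : (n : ℝ) = n' := by linarith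
  exact_mod_cast this

/-- Let `ζ` be irrational, `B = {n + mζ}`, `B_e = {n + mζ : n even}`,
`B_o = {n + mζ : n odd}`. Let `C` contain exactly one representative of each equivalence
class of `x ∼ y ↔ x - y ∈ B`, and set `M = C + B_e`. Then the difference set of `M` is
disjoint from `B_o`, and `ℝ \ M = M + 1`. -/
theorem stmt_13 (ζ : ℝ) (hζ : Irrational ζ)
    (B Be Bo : Set ℝ)
    (hB : B = {x : ℝ | ∃ n m : ℤ, x = n + m * ζ})
    (hBe : Be = {x : ℝ | ∃ n m : ℤ, Even n ∧ x = n + m * ζ})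
    (hBo : Bo = {x : ℝ | ∃ n m : ℤ, Odd n ∧ x = n + m * ζ})
    (C : Set ℝ) (hC : ∀ x : ℝ, ∃! c, c ∈ C ∧ x - c ∈ B)
    (M : Set ℝ) (hM : M = {x : ℝ | ∃ c ∈ C, ∃ b ∈ Be, x = c + b}) :
    {x : ℝ | ∃ m₁ ∈ M, ∃ m₂ ∈ M, x = m₁ - m₂} ∩ Bo = ∅ ∧
    Mᶜ = (fun m : ℝ => m + 1) '' M := by
  have uniq := uniq_rep ζ hζ
  subst hB hBe hBo hM
  constructor
  · rw [eq_empty_iff_forall_notMem]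
    rintro x ⟨⟨m₁, ⟨c₁, hc₁, b₁, ⟨n₁, k₁, hn₁, hb₁⟩, hm₁⟩,
              m₂, ⟨c₂, hc₂, b₂, ⟨n₂, k₂, hn₂, hb₂⟩, hm₂⟩, hx⟩,
            ⟨no, ko, hno, hxo⟩⟩
    -- c₁ = c₂ by uniqueness at m₂
    obtain ⟨c, hcspec, hcuniq⟩ := hC m₂
    have e2 : c₂ = c := hcuniq c₂ ⟨hc₂, ⟨n₂, k₂, by rw [hm₂, hb₂]; ring⟩⟩
    have e1 : c₁ = c := hcuniq c₁ ⟨hc₁, ⟨n₁ - no, k₁ - ko, by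
      have : m₂ = m₁ - x := by linarith
      rw [this, hm₁, hb₁, hxo]; push_cast; ring⟩⟩
    have hcc : c₁ = c₂ := e1.trans e2.symm
    have hx' : (↑(n₁ - n₂) : ℝ) + (↑(k₁ - k₂) : ℝ) * ζ = ↑no + ↑ko * ζ := by
      push_cast
      rw [hm₁, hb₁, hm₂, hb₂, hcc] at hx
      linarith
    obtain ⟨hne, -⟩ := uniq _ _ _ _ hx'
    obtain ⟨a, ha⟩ := hn₁
    obtain ⟨b, hb⟩ := hn₂
    obtain ⟨d, hd⟩ := hno
    omega
  · ext x
    simp only [mem_compl_iff, mem_setOf_eq, mem_image]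
    obtain ⟨c, ⟨hcC, n, m, hcB⟩, hcuniq⟩ := hC x
    constructor
    · intro hx
      have hnodd : Odd n := by
        rw [← Int.not_even_iff_odd]
        intro hn
        exact hx ⟨c, hcC, (n : ℝ) + m * ζ, ⟨n, m, hn, rfl⟩, by linarith⟩
      obtain ⟨d, hd⟩ := hnodd
      refine ⟨x - 1, ⟨c, hcC, (↑(n - 1) : ℝ) + m * ζ, ⟨n - 1, m, ⟨d, by omega⟩, rfl⟩, ?_⟩, by ring⟩
      push_cast; linarith
    · rintro ⟨y, ⟨c', hc'C, b, ⟨n', m', hn', hb⟩, hy⟩, hxy⟩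
      rintro ⟨c'', hc''C, b'', ⟨n'', m'', hn'', hb''⟩, hx⟩
      -- x = y + 1 = c' + n' + m'ζ + 1  and  x = c'' + n'' + m''ζ
      have e1 : c' = c := hcuniq c' ⟨hc'C, ⟨n' + 1, m', by
        rw [← hxy, hy, hb]; push_cast; ring⟩⟩
      have e2 : c'' = c := hcuniq c'' ⟨hc''C, ⟨n'', m'', by rw [hx, hb'']; ring⟩⟩
      have key : (↑(n' + 1) : ℝ) + m' * ζ = (n'' : ℝ) + m'' * ζ := by
        push_cast
        rw [hb''] at hx
        rw [hb] at hy
        rw [e1] at hy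
        rw [e2] at hx
        rw [← hxy] at hx
        linarith
      obtain ⟨hne, -⟩ := uniq _ _ _ _ key
      obtain ⟨a, ha⟩ := hn'
      obtain ⟨b2, hb2⟩ := hn''
      omega
end
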